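/- arXiv:2507.04500 — 7 statements merged into one kernel-verified Lean document; each statement's English description precedes it below -/
import Mathlib

section
/- Let E and F be two L-outcome POVMs on ℂ^d. Then the supremum over all density matrices ρ (positive semidefinite matrices with trace 1) of (1/2)·∑_{j=1}^{L} |Re trace(E j · ρ) − Re trace(F j · ρ)| equals the maximum over all subsets x ⊆ Fin L of ‖∑_{j ∈ x} (E j − F j)‖, where ‖·‖ is the ℓ²→ℓ² operator (spectral) norm. -/
open scoped ComplexOrder
noncomputable def specNorm {ι : Type*} [Fintype ι] [DecidableEq ι] (A : Matrix ι ι ℂ) : ℝ :=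
  ‖Matrix.toEuclideanCLM (𝕜 := ℂ) A‖

namespace OpDistAux


open Matrix

variable {d : ℕ}

lemma dot_eq_inner (v w : Fin d → ℂ) :
    dotProduct (star v) w =
      @inner ℂ _ _ ((WithLp.equiv 2 _).symm v : EuclideanSpace ℂ (Fin d))
        ((WithLp.equiv 2 _).symm w) :=
  (dotProduct_comm (star v) w).trans rfl

lemma re_dot_le (A : Matrix (Fin d) (Fin d) ℂ) (v : Fin d → ℂ) :
    |(dotProduct (star v) (A *ᵥ v)).re| ≤
      specNorm A * (dotProduct (star v) v).re := by
  set w : EuclideanSpace ℂ (Fin d) := (WithLp.equiv 2 _).symm v with hw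
  have h1 : dotProduct (star v) (A *ᵥ v) =
      @inner ℂ _ _ w (Matrix.toEuclideanCLM (𝕜 := ℂ) A w) := by
    rw [dot_eq_inner, hw]; rfl
  have h2 : (dotProduct (star v) v).re = ‖w‖ ^ 2 := by
    rw [dot_eq_inner, ← hw]
    have := @inner_self_eq_norm_sq ℂ _ _ _ _ w
    simpa using this
  rw [h1, h2]
  calc |(@inner ℂ _ _ w (Matrix.toEuclideanCLM (𝕜 := ℂ) A w)).re|
      ≤ ‖(@inner ℂ _ _ w (Matrix.toEuclideanCLM (𝕜 := ℂ) A w))‖ := Complex.abs_re_le_norm _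
    _ ≤ ‖w‖ * ‖Matrix.toEuclideanCLM (𝕜 := ℂ) A w‖ := norm_inner_le_norm _ _
    _ ≤ ‖w‖ * (‖Matrix.toEuclideanCLM (𝕜 := ℂ) A‖ * ‖w‖) := by
        gcongr; exact ContinuousLinearMap.le_opNorm _ _
    _ = specNorm A * ‖w‖ ^ 2 := by simp only [specNorm]; ring

lemma trace_mul_outer (A : Matrix (Fin d) (Fin d) ℂ) (v : Fin d → ℂ) :
    (A * Matrix.vecMulVec v (star v)).trace = dotProduct (star v) (A *ᵥ v) := by
  simp only [Matrix.trace, Matrix.diag, Matrix.mul_apply, Matrix.vecMulVec_apply,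
    dotProduct, Matrix.mulVec, Pi.star_apply, Finset.mul_sum]
  exact Finset.sum_congr rfl fun i _ => Finset.sum_congr rfl fun k _ => by ring

lemma posSemidef_outer (v : Fin d → ℂ) : (Matrix.vecMulVec v (star v)).PosSemidef := by
  refine Matrix.PosSemidef.of_dotProduct_mulVec_nonneg ?_ ?_
  · ext i j
    simp [Matrix.conjTranspose_apply, Matrix.vecMulVec_apply, mul_comm]
  · intro x
    have h : dotProduct (star x) (Matrix.vecMulVec v (star v) *ᵥ x) =
        star (dotProduct (star v) x) * (dotProduct (star v) x) := by
      simp only [dotProduct, Matrix.mulVec, Matrix.vecMulVec_apply, Pi.star_apply,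
        Finset.mul_sum, star_sum, Finset.sum_mul, star_mul', star_star]
      rw [Finset.sum_comm]
      exact Finset.sum_congr rfl fun i _ => Finset.sum_congr rfl fun k _ => by ring
    rw [h]
    exact star_mul_self_nonneg _

open scoped MatrixOrder in
lemma re_trace_mul_le (A : Matrix (Fin d) (Fin d) ℂ) {ρ : Matrix (Fin d) (Fin d) ℂ}
    (hρ : ρ.PosSemidef) (h1 : ρ.trace = 1) :
    |((A * ρ).trace).re| ≤ specNorm A := by
  set s := CFC.sqrt ρ with hs
  have hherm : s.IsHermitian := (CFC.sqrt_nonneg ρ).posSemidef.1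
  have hss : s * s = ρ := CFC.sqrt_mul_sqrt_self ρ hρ.nonneg
  have htr : (A * ρ).trace = ∑ i, dotProduct (star fun k => s k i) (A *ᵥ fun k => s k i) := by
    rw [← hss, ← Matrix.mul_assoc, Matrix.trace_mul_comm]
    simp only [Matrix.trace, Matrix.diag, Matrix.mul_apply, dotProduct,
      Matrix.mulVec, Pi.star_apply, Finset.mul_sum]
    refine Finset.sum_congr rfl fun i _ => ?_
    refine Finset.sum_congr rfl fun j _ => Finset.sum_congr rfl fun k _ => ?_
    rw [← hherm.apply i j]
  have hnorm : ∑ i, (dotProduct (star fun k => s k i) (fun k => s k i)).re = 1 := by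
    have : ∑ i, dotProduct (star fun k => s k i) (fun k => s k i) = ρ.trace := by
      rw [← hss]
      simp only [Matrix.trace, Matrix.diag, Matrix.mul_apply, dotProduct, Pi.star_apply]
      refine Finset.sum_congr rfl fun i _ => Finset.sum_congr rfl fun j _ => ?_
      rw [← hherm.apply i j]
    rw [← Complex.re_sum, this, h1, Complex.one_re]
  calc |((A * ρ).trace).re| = |∑ i, (dotProduct (star fun k => s k i) (A *ᵥ fun k => s k i)).re| := by
        rw [htr, Complex.re_sum]
    _ ≤ ∑ i, |(dotProduct (star fun k => s k i) (A *ᵥ fun k => s k i)).re| :=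
        Finset.abs_sum_le_sum_abs _ _
    _ ≤ ∑ i, specNorm A * (dotProduct (star fun k => s k i) (fun k => s k i)).re := by
        refine Finset.sum_le_sum fun i _ => re_dot_le A _
    _ = specNorm A := by rw [← Finset.mul_sum, hnorm, mul_one]


open Matrix

variable {d : ℕ}

lemma exists_top_eigvec (hd : 0 < d) {S : Matrix (Fin d) (Fin d) ℂ} (hS : S.IsHermitian) :
    ∃ (v : Fin d → ℂ) (lam : ℝ),
      dotProduct (star v) v = 1 ∧ S *ᵥ v = (lam : ℂ) • v ∧ specNorm S ≤ |lam| := by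
  haveI : NeZero d := ⟨hd.ne'⟩
  obtain ⟨i0, -, hmax⟩ := Finset.exists_max_image Finset.univ
    (fun i => |hS.eigenvalues i|) ⟨⟨0, hd⟩, Finset.mem_univ _⟩
  set lam := hS.eigenvalues i0 with hlam
  set v : Fin d → ℂ := ⇑(hS.eigenvectorBasis i0) with hv
  refine ⟨v, lam, ?_, ?_, ?_⟩
  · have h1 : ‖hS.eigenvectorBasis i0‖ = 1 := (hS.eigenvectorBasis).orthonormal.1 i0
    have : dotProduct (star v) v =
        @inner ℂ _ _ (hS.eigenvectorBasis i0) (hS.eigenvectorBasis i0) :=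
        (dotProduct_comm (star v) v).trans rfl
    rw [this, @inner_self_eq_norm_sq_to_K ℂ, h1]
    norm_num
  · rw [hS.mulVec_eigenvectorBasis i0]
    funext k
    simp only [Pi.smul_apply, Complex.real_smul, smul_eq_mul]
    rfl
  · have hsa : _root_.IsSelfAdjoint (Matrix.toEuclideanCLM (𝕜 := ℂ) S) := by
      show star _ = _
      rw [← map_star]
      exact congrArg _ hS
    have hspec : spectrum ℂ (Matrix.toEuclideanCLM (𝕜 := ℂ) S) = spectrum ℂ S :=
      AlgEquiv.spectrum_eq (Matrix.toEuclideanCLM (𝕜 := ℂ)) S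
    have hspecS : spectrum ℂ S = Set.range (fun i => (hS.eigenvalues i : ℂ)) := by
      rw [hS.spectrum_eq_image_range, ← Set.range_comp]
      rfl
    have hrad := hsa.spectralRadius_eq_nnnorm
    have hle : (‖Matrix.toEuclideanCLM (𝕜 := ℂ) S‖₊ : ENNReal) ≤ (‖lam‖₊ : ENNReal) := by
      rw [← hrad, spectralRadius]
      refine iSup₂_le fun k hk => ?_
      rw [hspec, hspecS] at hk
      obtain ⟨i, rfl⟩ := hk
      have h1 : ‖(hS.eigenvalues i : ℂ)‖₊ = ‖hS.eigenvalues i‖₊ := by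
        simp [nnnorm]
      rw [h1]
      have h2 : ‖hS.eigenvalues i‖ ≤ ‖lam‖ := by
        rw [Real.norm_eq_abs, Real.norm_eq_abs]
        exact hmax i (Finset.mem_univ i)
      exact_mod_cast h2
    have : ‖Matrix.toEuclideanCLM (𝕜 := ℂ) S‖ ≤ ‖lam‖ := by exact_mod_cast hle
    rw [Real.norm_eq_abs] at this
    exact this

end OpDistAux

def IsPOVM {ι : Type*} {L : ℕ} [Fintype ι] [DecidableEq ι]
    (E : Fin L → Matrix ι ι ℂ) : Prop :=
  (∀ j, (E j).PosSemidef) ∧ (∑ j, E j) = 1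


/-- The operational distance (defined via a maximization over density matrices)
equals the maximal spectral norm of grouped differences of POVM elements. -/
theorem operational_distance_eq_max_subset
    {d L : ℕ} (hd : 0 < d)
    (E F : Fin L → Matrix (Fin d) (Fin d) ℂ)
    (hE : IsPOVM E) (hF : IsPOVM F) :
    (⨆ ρ : {ρ : Matrix (Fin d) (Fin d) ℂ // ρ.PosSemidef ∧ ρ.trace = 1},
        (1 / 2 : ℝ) * ∑ j, |((E j * (ρ : Matrix (Fin d) (Fin d) ℂ)).trace.re) -
          ((F j * (ρ : Matrix (Fin d) (Fin d) ℂ)).trace.re)|) =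
      ⨆ x : Finset (Fin L), specNorm (∑ j ∈ x, (E j - F j)) := by
  classical
  obtain ⟨hEp, hEs⟩ := hE
  obtain ⟨hFp, hFs⟩ := hF
  have hDsum : ∑ j, (E j - F j) = 0 := by
    rw [Finset.sum_sub_distrib, hEs, hFs, sub_self]
  have hDherm : ∀ j, (E j - F j).IsHermitian := fun j => ((hEp j).1).sub ((hFp j).1)
  let T := {ρ : Matrix (Fin d) (Fin d) ℂ // ρ.PosSemidef ∧ ρ.trace = 1}
  let f : T → ℝ := fun ρ =>
    (1 / 2 : ℝ) * ∑ j, |(((E j - F j) * (ρ : Matrix (Fin d) (Fin d) ℂ)).trace).re|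
  let g : Finset (Fin L) → ℝ := fun x => specNorm (∑ j ∈ x, (E j - F j))
  have hbody : ∀ ρ : T, (1 / 2 : ℝ) * ∑ j, |((E j * (ρ : Matrix (Fin d) (Fin d) ℂ)).trace.re) -
      ((F j * (ρ : Matrix (Fin d) (Fin d) ℂ)).trace.re)| = f ρ := by
    intro ρ
    show _ = (1 / 2 : ℝ) * _
    congr 1
    refine Finset.sum_congr rfl fun j _ => ?_
    rw [Matrix.sub_mul, Matrix.trace_sub, Complex.sub_re]
  -- per-ρ sums
  have hts : ∀ (ρ : Matrix (Fin d) (Fin d) ℂ) (s : Finset (Fin L)),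
      ∑ j ∈ s, (((E j - F j) * ρ).trace).re = (((∑ j ∈ s, (E j - F j)) * ρ).trace).re := by
    intro ρ s
    rw [Finset.sum_mul, Matrix.trace_sum, Complex.re_sum]
  have step1 : ∀ ρ : T, f ρ ≤ ⨆ x, g x := by
    rintro ⟨ρv, hρ, hρ1⟩
    set t : Fin L → ℝ := fun j => (((E j - F j) * ρv).trace).re with ht
    have h0 : ∑ j, t j = 0 := by
      rw [ht]
      show ∑ j, (((E j - F j) * ρv).trace).re = 0
      rw [hts ρv Finset.univ, hDsum, Matrix.zero_mul, Matrix.trace_zero, Complex.zero_re]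
    set x : Finset (Fin L) := Finset.univ.filter (fun j => 0 ≤ t j) with hx
    have hsplit : ∑ j, |t j| = 2 * ∑ j ∈ x, t j := by
      have hpos : ∑ j ∈ x, |t j| = ∑ j ∈ x, t j :=
        Finset.sum_congr rfl fun j hj => abs_of_nonneg (Finset.mem_filter.1 hj).2
      have hneg : ∑ j ∈ Finset.univ.filter (fun j => ¬ 0 ≤ t j), |t j| =
          -∑ j ∈ Finset.univ.filter (fun j => ¬ 0 ≤ t j), t j := by
        rw [← Finset.sum_neg_distrib]
        exact Finset.sum_congr rfl fun j hj =>
          abs_of_neg (lt_of_not_ge (Finset.mem_filter.1 hj).2)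
      have h3 : ∑ j ∈ x, t j + ∑ j ∈ Finset.univ.filter (fun j => ¬ 0 ≤ t j), t j = ∑ j, t j :=
        Finset.sum_filter_add_sum_filter_not _ _ _
      have h4 : ∑ j ∈ x, |t j| + ∑ j ∈ Finset.univ.filter (fun j => ¬ 0 ≤ t j), |t j| =
          ∑ j, |t j| := Finset.sum_filter_add_sum_filter_not _ _ _
      linarith
    have hkey : f ⟨ρv, hρ, hρ1⟩ ≤ g x := by
      show (1 / 2 : ℝ) * ∑ j, |t j| ≤ g x
      rw [hsplit]
      have : ∑ j ∈ x, t j ≤ g x := by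
        rw [ht]
        calc ∑ j ∈ x, (((E j - F j) * ρv).trace).re
            = (((∑ j ∈ x, (E j - F j)) * ρv).trace).re := hts ρv x
          _ ≤ |(((∑ j ∈ x, (E j - F j)) * ρv).trace).re| := le_abs_self _
          _ ≤ specNorm (∑ j ∈ x, (E j - F j)) := OpDistAux.re_trace_mul_le _ hρ hρ1
      linarith
    exact le_trans hkey (le_ciSup (Set.Finite.bddAbove (Set.finite_range g)) x)
  have hgnonneg : (0 : ℝ) ≤ ⨆ x, g x :=
    le_trans (norm_nonneg _) (le_ciSup (Set.Finite.bddAbove (Set.finite_range g)) (∅ : Finset (Fin L)))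
  have hbdd : BddAbove (Set.range f) := ⟨⨆ x, g x, by rintro _ ⟨ρ, rfl⟩; exact step1 ρ⟩
  rw [iSup_congr hbody]
  refine le_antisymm (Real.iSup_le step1 hgnonneg) (ciSup_le fun x => ?_)
  -- reverse direction
  obtain ⟨v, lam, hv1, hveig, hvnorm⟩ := OpDistAux.exists_top_eigvec hd
    (show (∑ j ∈ x, (E j - F j)).IsHermitian by
      show (∑ j ∈ x, (E j - F j)).conjTranspose = _
      rw [Matrix.conjTranspose_sum]
      exact Finset.sum_congr rfl fun j _ => hDherm j)
  have hρpsd : (Matrix.vecMulVec v (star v)).PosSemidef := OpDistAux.posSemidef_outer v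
  have hρtr : (Matrix.vecMulVec v (star v)).trace = 1 := by
    have h := OpDistAux.trace_mul_outer (1 : Matrix (Fin d) (Fin d) ℂ) v
    rw [Matrix.one_mul, Matrix.one_mulVec, hv1] at h
    rw [h]
  set ρ : T := ⟨Matrix.vecMulVec v (star v), hρpsd, hρtr⟩ with hρdef
  set t : Fin L → ℝ := fun j => (((E j - F j) * Matrix.vecMulVec v (star v)).trace).re with ht
  have hxval : ∑ j ∈ x, t j = lam := by
    rw [ht]
    show ∑ j ∈ x, (((E j - F j) * Matrix.vecMulVec v (star v)).trace).re = lam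
    rw [hts _ x, OpDistAux.trace_mul_outer, hveig, dotProduct_smul, hv1]
    simp
  have hxc : ∑ j ∈ Finset.univ \ x, (E j - F j) = -(∑ j ∈ x, (E j - F j)) := by
    have h := Finset.sum_sdiff (f := fun j => E j - F j) (Finset.subset_univ x)
    rw [hDsum] at h
    exact eq_neg_of_add_eq_zero_left h
  have hxcval : ∑ j ∈ Finset.univ \ x, t j = -lam := by
    rw [ht]
    show ∑ j ∈ Finset.univ \ x, (((E j - F j) * Matrix.vecMulVec v (star v)).trace).re = -lam
    rw [hts _ _, hxc, Matrix.neg_mul, Matrix.trace_neg, Complex.neg_re, OpDistAux.trace_mul_outer,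
      hveig, dotProduct_smul, hv1]
    simp
  have hsum : |lam| + |lam| ≤ ∑ j, |t j| := by
    have h1 : |∑ j ∈ x, t j| ≤ ∑ j ∈ x, |t j| := Finset.abs_sum_le_sum_abs _ _
    have h2 : |∑ j ∈ Finset.univ \ x, t j| ≤ ∑ j ∈ Finset.univ \ x, |t j| :=
      Finset.abs_sum_le_sum_abs _ _
    have h3 : ∑ j ∈ Finset.univ \ x, |t j| + ∑ j ∈ x, |t j| = ∑ j, |t j| :=
      Finset.sum_sdiff (Finset.subset_univ x)
    rw [hxval] at h1
    rw [hxcval, abs_neg] at h2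
    linarith
  have hfρ : g x ≤ f ρ := by
    calc g x ≤ |lam| := hvnorm
      _ = (1 / 2 : ℝ) * (|lam| + |lam|) := by ring
      _ ≤ f ρ := by
          show _ ≤ (1 / 2 : ℝ) * ∑ j, |t j|
          linarith
  exact le_trans hfρ (le_ciSup hbdd ρ)
end

section
/- Let n ≥ 1 and let φ : Fin m → (Fin 2 → ℂ) be unit vectors satisfying the single-qubit 2-design frame identity. For a multi-index i : Fin n → Fin m define the matrix ν i : Matrix (Fin n → Fin 2) (Fin n → Fin 2) ℂ entrywise by ν i x y = ∏_{k} ( 6·φ (i k) (x k)·conj(φ (i k) (y k)) − 2·(if x k = y k then 1 else 0) ), and define the product state ψ i : (Fin n → Fin 2) → ℂ by ψ i x = ∏_k φ (i k) (x k). Let F : Matrix (Fin n → Fin 2) (Fin n → Fin 2) ℂ be given entrywise by F x y = ∏_k F_k (x k) (y k) for matrices F_k : Matrix (Fin 2) (Fin 2) ℂ with 0 ≤ F_k ≤ 1 (positive semidefinite and 1 − F_k positive semidefinite). Then ∑_{i : Fin n → Fin m} (⟨ψ i, F (ψ i)⟩ / m^n) • (ν i)² is the matrix with entries ∏_k G_k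 (x k) (y k) where G_k = 2·(F_k + 2·(trace F_k) • 1), and consequently ‖∑_i (⟨ψ i, F (ψ i)⟩ / m^n) • (ν i)²‖ ≤ 10^n, where ‖·‖ is the ℓ²→ℓ² operator (spectral) norm. -/
open scoped ComplexOrder

noncomputable def cinner {ι : Type*} [Fintype ι] (u v : ι → ℂ) : ℂ :=
  ∑ x, (starRingEnd ℂ) (u x) * v x

noncomputable def outer {ι : Type*} (u : ι → ℂ) : Matrix ι ι ℂ :=
  Matrix.of fun x y => u x * (starRingEnd ℂ) (u y)

section Helpers

open Matrix

theorem Matrix.posSemidef_iff_eq_transpose_mul_self {ι : Type*} [Fintype ι] [DecidableEq ι]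
    {A : Matrix ι ι ℂ} : A.PosSemidef ↔ ∃ B : Matrix ι ι ℂ, A = Bᴴ * B := by
  open scoped MatrixOrder in
  constructor
  · intro h
    obtain ⟨B, hB⟩ := CStarAlgebra.nonneg_iff_eq_star_mul_self.mp h.nonneg
    exact ⟨B, hB⟩
  · rintro ⟨B, rfl⟩
    exact posSemidef_conjTranspose_mul_self _

/-- entrywise tensor product of `2×2` matrices -/
noncomputable def tmat {n : ℕ} (A : Fin n → Matrix (Fin 2) (Fin 2) ℂ) :
    Matrix (Fin n → Fin 2) (Fin n → Fin 2) ℂ :=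
  Matrix.of fun x y => ∏ k, A k (x k) (y k)

lemma tmat_apply {n : ℕ} (A : Fin n → Matrix (Fin 2) (Fin 2) ℂ) (x y) :
    tmat A x y = ∏ k, A k (x k) (y k) := rfl

lemma tmat_mul {n : ℕ} (A B : Fin n → Matrix (Fin 2) (Fin 2) ℂ) :
    tmat A * tmat B = tmat fun k => A k * B k := by
  ext x y
  rw [Matrix.mul_apply]
  simp only [tmat_apply, Matrix.mul_apply]
  rw [Finset.prod_univ_sum, Fintype.piFinset_univ]
  simp [Finset.prod_mul_distrib]

lemma tmat_conjTranspose {n : ℕ} (A : Fin n → Matrix (Fin 2) (Fin 2) ℂ) :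
    (tmat A)ᴴ = tmat fun k => (A k)ᴴ := by
  ext x y
  simp [tmat_apply, conjTranspose_apply, map_prod]

lemma tmat_posSemidef {n : ℕ} (A : Fin n → Matrix (Fin 2) (Fin 2) ℂ)
    (h : ∀ k, (A k).PosSemidef) : (tmat A).PosSemidef := by
  choose B hB using fun k => (Matrix.posSemidef_iff_eq_transpose_mul_self).mp (h k)
  have : tmat A = (tmat B)ᴴ * tmat B := by
    rw [tmat_conjTranspose, tmat_mul]
    exact congrArg tmat (funext hB)
  rw [this]
  exact posSemidef_conjTranspose_mul_self _

lemma psd_smulC {ι : Type*} [Fintype ι] (c : ℝ) (hc : 0 ≤ c) {A : Matrix ι ι ℂ}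
    (hA : A.PosSemidef) : ((c : ℂ) • A).PosSemidef := by
  refine Matrix.posSemidef_iff_dotProduct_mulVec.mpr ⟨?_, fun x => ?_⟩
  · unfold Matrix.IsHermitian
    rw [conjTranspose_smul, hA.1]
    congr 1
    simp
  · rw [smul_mulVec, dotProduct_smul]
    exact smul_nonneg (by exact_mod_cast Complex.zero_le_real.mpr hc) (hA.dotProduct_mulVec_nonneg x)

lemma psd_zero {ι : Type*} [Fintype ι] : (0 : Matrix ι ι ℂ).PosSemidef := by
  refine Matrix.posSemidef_iff_dotProduct_mulVec.mpr ⟨isHermitian_zero, fun x => ?_⟩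
  simp [Matrix.zero_mulVec]

lemma psd_diag {ι : Type*} [Fintype ι] [DecidableEq ι] {A : Matrix ι ι ℂ}
    (hA : A.PosSemidef) (i : ι) : 0 ≤ A i i := by
  simpa [Matrix.mulVec_single, dotProduct, Pi.single_apply] using hA.dotProduct_mulVec_nonneg (Pi.single i 1)

lemma G_facts {A : Matrix (Fin 2) (Fin 2) ℂ} (hA : A.PosSemidef) (hA1 : (1 - A).PosSemidef) :
    ((2 : ℂ) • (A + (2 * A.trace) • 1)).PosSemidef ∧
    ((10 : ℂ) • (1 : Matrix (Fin 2) (Fin 2) ℂ) -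
      (2 : ℂ) • (A + (2 * A.trace) • 1)).PosSemidef := by
  have h00 := psd_diag hA 0
  have h11 := psd_diag hA 1
  have g00 := psd_diag hA1 0
  have g11 := psd_diag hA1 1
  have htr : A.trace = A 0 0 + A 1 1 := Matrix.trace_fin_two A
  have im00 : (A 0 0).im = 0 := ((Complex.le_def.mp h00).2).symm.trans Complex.zero_im
  have im11 : (A 1 1).im = 0 := ((Complex.le_def.mp h11).2).symm.trans Complex.zero_im
  have hre : A.trace = ((A 0 0).re + (A 1 1).re : ℝ) := by
    apply Complex.ext
    · simp [htr]
    · simp [htr, im00, im11]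
  set t : ℝ := (A 0 0).re + (A 1 1).re with ht
  have ht0 : 0 ≤ t := add_nonneg (Complex.le_def.mp h00).1 (Complex.le_def.mp h11).1
  have ht2 : t ≤ 2 := by
    have b0 : (A 0 0).re ≤ 1 := by
      have := (Complex.le_def.mp g00).1
      simp [Matrix.sub_apply, Matrix.one_apply, Complex.sub_re] at this
      linarith
    have b1 : (A 1 1).re ≤ 1 := by
      have := (Complex.le_def.mp g11).1
      simp [Matrix.sub_apply, Matrix.one_apply, Complex.sub_re] at this
      linarith
    linarith
  constructor
  · have hdecomp : (2 : ℂ) • (A + (2 * A.trace) • 1) =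
        ((2 : ℝ) : ℂ) • A + (((4 * t : ℝ)) : ℂ) • (1 : Matrix (Fin 2) (Fin 2) ℂ) := by
      rw [hre]
      push_cast
      module
    rw [hdecomp]
    exact (psd_smulC 2 (by norm_num) hA).add (psd_smulC _ (by positivity) Matrix.PosSemidef.one)
  · have hdecomp : (10 : ℂ) • (1 : Matrix (Fin 2) (Fin 2) ℂ) -
        (2 : ℂ) • (A + (2 * A.trace) • 1) =
        ((2 : ℝ) : ℂ) • (1 - A) + (((8 - 4 * t : ℝ)) : ℂ) • (1 : Matrix (Fin 2) (Fin 2) ℂ) := by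
      rw [hre]
      push_cast
      module
    rw [hdecomp]
    exact (psd_smulC 2 (by norm_num) hA1).add
      (psd_smulC _ (by linarith) Matrix.PosSemidef.one)

lemma psd_ten : ((10 : ℂ) • (1 : Matrix (Fin 2) (Fin 2) ℂ)).PosSemidef := by
  have := psd_smulC (ι := Fin 2) 10 (by norm_num) Matrix.PosSemidef.one
  simpa using this

lemma tmat_bound {n : ℕ} (G : Fin n → Matrix (Fin 2) (Fin 2) ℂ)
    (hG : ∀ k, (G k).PosSemidef) (h10 : ∀ k, ((10 : ℂ) • 1 - G k).PosSemidef) :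
    (((10 : ℂ) ^ n) • (1 : Matrix (Fin n → Fin 2) (Fin n → Fin 2) ℂ) - tmat G).PosSemidef := by
  set E : ℕ → Matrix (Fin n → Fin 2) (Fin n → Fin 2) ℂ :=
    fun j => tmat (fun k => if (k : ℕ) < j then G k else (10 : ℂ) • 1) with hE
  have step : ∀ j < n, (E j - E (j + 1)).PosSemidef := by
    intro j hj
    have hdiff : E j - E (j + 1) = tmat (fun k =>
        if (k : ℕ) < j then G k
        else if (k : ℕ) = j then (10 : ℂ) • 1 - G k else (10 : ℂ) • 1) := by
      ext x y
      simp only [Matrix.sub_apply, hE, tmat_apply]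
      set jf : Fin n := ⟨j, hj⟩ with hjf
      rw [← Finset.mul_prod_erase Finset.univ _ (Finset.mem_univ jf),
          ← Finset.mul_prod_erase Finset.univ
            (fun k : Fin n => (if (k : ℕ) < j + 1 then G k else (10 : ℂ) • 1) (x k) (y k))
            (Finset.mem_univ jf),
          ← Finset.mul_prod_erase Finset.univ
            (fun k : Fin n => (if (k : ℕ) < j then G k
              else if (k : ℕ) = j then (10 : ℂ) • 1 - G k else (10 : ℂ) • 1) (x k) (y k))
            (Finset.mem_univ jf)]
      have e1 : ∀ k ∈ Finset.univ.erase jf,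
          (if (k : ℕ) < j + 1 then G k else (10 : ℂ) • 1) (x k) (y k) =
          (if (k : ℕ) < j then G k else (10 : ℂ) • 1) (x k) (y k) := by
        intro k hk
        have hkj : (k : ℕ) ≠ j := fun h => (Finset.mem_erase.mp hk).1 (Fin.ext h)
        by_cases h : (k : ℕ) < j
        · have h' : (k : ℕ) < j + 1 := by omega
          rw [if_pos h, if_pos h']
        · have h' : ¬ ((k : ℕ) < j + 1) := by omega
          rw [if_neg h, if_neg h']
      have e2 : ∀ k ∈ Finset.univ.erase jf,
          (if (k : ℕ) < j then G k
            else if (k : ℕ) = j then (10 : ℂ) • 1 - G k else (10 : ℂ) • 1) (x k) (y k) =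
          (if (k : ℕ) < j then G k else (10 : ℂ) • 1) (x k) (y k) := by
        intro k hk
        have hkj : (k : ℕ) ≠ j := fun h => (Finset.mem_erase.mp hk).1 (Fin.ext h)
        by_cases h : (k : ℕ) < j
        · rw [if_pos h, if_pos h]
        · rw [if_neg h, if_neg h, if_neg hkj]
      rw [Finset.prod_congr rfl e1, Finset.prod_congr rfl e2]
      have hjfj : (jf : ℕ) = j := rfl
      rw [if_neg (by omega : ¬ ((jf : ℕ) < j)), if_pos (by omega : (jf : ℕ) < j + 1),
        if_neg (by omega : ¬ ((jf : ℕ) < j)), if_pos hjfj]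
      rw [Matrix.sub_apply]
      ring
    rw [hdiff]
    apply tmat_posSemidef
    intro k
    by_cases h1 : (k : ℕ) < j
    · rw [if_pos h1]; exact hG k
    · rw [if_neg h1]
      by_cases h2 : (k : ℕ) = j
      · rw [if_pos h2]; exact h10 k
      · rw [if_neg h2]; exact psd_ten
  have htel : E 0 - E n = ∑ j ∈ Finset.range n, (E j - E (j + 1)) :=
    (Finset.sum_range_sub' E n).symm
  have hE0 : E 0 = ((10 : ℂ) ^ n) • (1 : Matrix (Fin n → Fin 2) (Fin n → Fin 2) ℂ) := by
    ext x y
    simp only [hE, tmat_apply, Nat.not_lt_zero, if_false, Matrix.smul_apply, Matrix.one_apply,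
      smul_eq_mul]
    by_cases hxy : x = y
    · subst hxy
      simp [Finset.prod_const, Finset.card_univ]
    · obtain ⟨k, hk⟩ := Function.ne_iff.mp hxy
      rw [Finset.prod_eq_zero (Finset.mem_univ k) (by simp [Matrix.one_apply, hk]),
        if_neg hxy, mul_zero]
  have hEn : E n = tmat G := by
    apply congrArg tmat
    funext k
    rw [if_pos k.isLt]
  have hfin : ((10 : ℂ) ^ n) • (1 : Matrix (Fin n → Fin 2) (Fin n → Fin 2) ℂ) - tmat G =
      ∑ j ∈ Finset.range n, (E j - E (j + 1)) := by rw [← htel, hE0, hEn]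
  rw [hfin]
  exact Finset.sum_induction _ _ (fun a b ha hb => ha.add hb) psd_zero
    (fun j hj => step j (Finset.mem_range.mp hj))

theorem EuclideanSpace.inner_piLp_equiv_symm {ι : Type*} [Fintype ι] (x y : ι → ℂ) :
    inner ℂ ((WithLp.equiv 2 (ι → ℂ)).symm x) ((WithLp.equiv 2 (ι → ℂ)).symm y) =
      star x ⬝ᵥ y := by
  rw [dotProduct_comm]; rfl

theorem Matrix.toEuclideanCLM_piLp_equiv_symm {ι : Type*} [Fintype ι] [DecidableEq ι]
    (A : Matrix ι ι ℂ) (x : ι → ℂ) :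
    Matrix.toEuclideanCLM (𝕜 := ℂ) A ((WithLp.equiv 2 (ι → ℂ)).symm x) =
      (WithLp.equiv 2 (ι → ℂ)).symm (Matrix.toLin' A x) := rfl

set_option maxHeartbeats 1000000 in
lemma specNorm_le_of_psd {ι : Type*} [Fintype ι] [DecidableEq ι] {M : Matrix ι ι ℂ}
    (hM : M.PosSemidef) {c : ℝ} (hc : 0 ≤ c)
    (hle : (((c : ℂ) • (1 : Matrix ι ι ℂ)) - M).PosSemidef) :
    specNorm M ≤ c := by
  obtain ⟨D, hD⟩ := Matrix.posSemidef_iff_eq_transpose_mul_self.mp hM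
  set e : (ι → ℂ) → EuclideanSpace ℂ ι := fun u => (WithLp.equiv 2 (ι → ℂ)).symm u with he
  have key : ∀ u w : ι → ℂ, (inner ℂ (e (D *ᵥ u)) (e (D *ᵥ w)) : ℂ) = star u ⬝ᵥ (M *ᵥ w) := by
    intro u w
    rw [EuclideanSpace.inner_piLp_equiv_symm, hD, ← Matrix.mulVec_mulVec,
      dotProduct_mulVec _ Dᴴ, ← Matrix.star_mulVec]
  have ray : ∀ u : ι → ℂ, ‖e (D *ᵥ u)‖ ^ 2 ≤ c * ‖e u‖ ^ 2 := by
    intro u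
    have h1 : (inner ℂ (e (D *ᵥ u)) (e (D *ᵥ u)) : ℂ) = star u ⬝ᵥ (M *ᵥ u) := key u u
    have h2 := hle.dotProduct_mulVec_nonneg u
    rw [Matrix.sub_mulVec, dotProduct_sub, Matrix.smul_mulVec, Matrix.one_mulVec,
      dotProduct_smul, sub_nonneg] at h2
    have h3 : (inner ℂ (e u) (e u) : ℂ) = star u ⬝ᵥ u := EuclideanSpace.inner_piLp_equiv_symm u u
    have h4 : (inner ℂ (e (D *ᵥ u)) (e (D *ᵥ u)) : ℂ) = (‖e (D *ᵥ u)‖ : ℂ) ^ 2 :=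
      inner_self_eq_norm_sq_to_K _
    have h5 : (inner ℂ (e u) (e u) : ℂ) = (‖e u‖ : ℂ) ^ 2 := inner_self_eq_norm_sq_to_K _
    have := h2
    rw [← h1, ← h3, h4, h5] at this
    have hre := (Complex.le_def.mp this).1
    simpa [← Complex.ofReal_pow] using hre
  have sqb : ∀ u : ι → ℂ, ‖e (D *ᵥ u)‖ ≤ Real.sqrt c * ‖e u‖ := by
    intro u
    have h0 : ‖e (D *ᵥ u)‖ = Real.sqrt (‖e (D *ᵥ u)‖ ^ 2) := by
      rw [Real.sqrt_sq (norm_nonneg _)]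
    rw [h0]
    calc Real.sqrt (‖e (D *ᵥ u)‖ ^ 2) ≤ Real.sqrt (c * ‖e u‖ ^ 2) :=
          Real.sqrt_le_sqrt (ray u)
      _ = Real.sqrt c * ‖e u‖ := by
          rw [Real.sqrt_mul hc, Real.sqrt_sq (norm_nonneg _)]
  rw [specNorm]
  refine ContinuousLinearMap.opNorm_le_bound _ hc fun x => ?_
  set v : ι → ℂ := WithLp.equiv 2 (ι → ℂ) x with hv
  have hx : x = e v := (Equiv.symm_apply_apply _ _).symm
  have happ : Matrix.toEuclideanCLM (𝕜 := ℂ) M x = e (M *ᵥ v) := by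
    rw [hx, Matrix.toEuclideanCLM_piLp_equiv_symm, Matrix.toLin'_apply]
  rw [happ]
  have hsq : ‖e (M *ᵥ v)‖ ^ 2 ≤ c * ‖e (M *ᵥ v)‖ * ‖x‖ := by
    have h1 : (‖e (M *ᵥ v)‖ : ℂ) ^ 2 = inner ℂ (e (M *ᵥ v)) (e (M *ᵥ v)) :=
      (inner_self_eq_norm_sq_to_K (𝕜 := ℂ) (e (M *ᵥ v))).symm
    have h2 : (inner ℂ (e (M *ᵥ v)) (e (M *ᵥ v)) : ℂ) = star (M *ᵥ v) ⬝ᵥ (M *ᵥ v) :=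
      EuclideanSpace.inner_piLp_equiv_symm _ _
    have h3 : star (M *ᵥ v) ⬝ᵥ (M *ᵥ v) = inner ℂ (e (D *ᵥ (M *ᵥ v))) (e (D *ᵥ v)) :=
      (key (M *ᵥ v) v).symm
    have h4 : ‖(inner ℂ (e (D *ᵥ (M *ᵥ v))) (e (D *ᵥ v)) : ℂ)‖ ≤
        ‖e (D *ᵥ (M *ᵥ v))‖ * ‖e (D *ᵥ v)‖ := norm_inner_le_norm _ _
    have h5 : ‖e (M *ᵥ v)‖ ^ 2 = ‖(inner ℂ (e (D *ᵥ (M *ᵥ v))) (e (D *ᵥ v)) : ℂ)‖ := by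
      rw [← h3, ← h2, ← h1]
      rw [show ((‖e (M *ᵥ v)‖ : ℂ) ^ 2 : ℂ) = ((‖e (M *ᵥ v)‖ ^ 2 : ℝ) : ℂ) by push_cast; ring,
        Complex.norm_real]
      exact (Real.norm_of_nonneg (by positivity)).symm
    rw [h5]
    calc ‖(inner ℂ (e (D *ᵥ (M *ᵥ v))) (e (D *ᵥ v)) : ℂ)‖
        ≤ ‖e (D *ᵥ (M *ᵥ v))‖ * ‖e (D *ᵥ v)‖ := h4
      _ ≤ (Real.sqrt c * ‖e (M *ᵥ v)‖) * (Real.sqrt c * ‖e v‖) := by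
          apply mul_le_mul (sqb _) (sqb _) (norm_nonneg _)
          positivity
      _ = c * ‖e (M *ᵥ v)‖ * ‖e v‖ := by
          rw [show (Real.sqrt c * ‖e (M *ᵥ v)‖) * (Real.sqrt c * ‖e v‖) =
            (Real.sqrt c * Real.sqrt c) * (‖e (M *ᵥ v)‖ * ‖e v‖) by ring,
            Real.mul_self_sqrt hc]
          ring
      _ = c * ‖e (M *ᵥ v)‖ * ‖x‖ := by rw [← hx]
  rcases eq_or_lt_of_le (norm_nonneg (e (M *ᵥ v))) with h | h
  · rw [← h]; positivity
  · nlinarith [hsq, h, norm_nonneg x]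

end Helpers

set_option maxHeartbeats 3000000 in
/-- Second moment of the local (tensor-product) 2-design estimator applied to a
product POVM element, and the resulting variance bound `10^n`. -/
theorem local_two_design_second_moment
    {n m : ℕ} (hn : 1 ≤ n) (φ : Fin m → (Fin 2 → ℂ))
    (hunit : ∀ a, cinner (φ a) (φ a) = 1)
    (hdesign : ∀ X : Matrix (Fin 2) (Fin 2) ℂ,
      (1 / (m : ℂ)) • ∑ a, cinner (φ a) (X.mulVec (φ a)) • outer (φ a) =
        (1 / 6 : ℂ) • (X + X.trace • (1 : Matrix (Fin 2) (Fin 2) ℂ)))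
    (ν : (Fin n → Fin m) → Matrix (Fin n → Fin 2) (Fin n → Fin 2) ℂ)
    (hν : ∀ i x y, ν i x y =
      ∏ k, (6 * φ (i k) (x k) * (starRingEnd ℂ) (φ (i k) (y k)) -
        2 * (if x k = y k then 1 else 0)))
    (ψ : (Fin n → Fin m) → ((Fin n → Fin 2) → ℂ))
    (hψ : ∀ i x, ψ i x = ∏ k, φ (i k) (x k))
    (Fk : Fin n → Matrix (Fin 2) (Fin 2) ℂ)
    (hFk : ∀ k, (Fk k).PosSemidef ∧ (1 - Fk k).PosSemidef)
    (F : Matrix (Fin n → Fin 2) (Fin n → Fin 2) ℂ)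
    (hF : ∀ x y, F x y = ∏ k, Fk k (x k) (y k)) :
    (∑ i, (cinner (ψ i) (F.mulVec (ψ i)) / ((m : ℂ) ^ n)) • (ν i * ν i) =
      Matrix.of fun x y =>
        ∏ k, ((2 : ℂ) • (Fk k + (2 * (Fk k).trace) • (1 : Matrix (Fin 2) (Fin 2) ℂ))) (x k) (y k)) ∧
    specNorm (∑ i, (cinner (ψ i) (F.mulVec (ψ i)) / ((m : ℂ) ^ n)) • (ν i * ν i)) ≤
      (10 : ℝ) ^ n := by
  classical
  -- `m` cannot be zero
  have hm : (m : ℂ) ≠ 0 := by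
    rcases Nat.eq_zero_or_pos m with h0 | h0
    · exfalso
      have h := hdesign 1
      subst h0
      rw [Finset.univ_eq_empty, Finset.sum_empty, smul_zero] at h
      have h2 := congrFun (congrFun h 0) 0
      simp [Matrix.smul_apply, Matrix.add_apply, Matrix.one_apply, Matrix.trace_one] at h2
      norm_num at h2
    · exact_mod_cast Nat.cast_ne_zero.mpr h0.ne'
  have hmn : (m : ℂ) ^ n ≠ 0 := pow_ne_zero _ hm
  set P : Fin m → Matrix (Fin 2) (Fin 2) ℂ := fun a => outer (φ a) with hPdef
  set Ma : Fin m → Matrix (Fin 2) (Fin 2) ℂ := fun a => (6 : ℂ) • P a - (2 : ℂ) • 1 with hMadef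
  have hunit' : ∀ a, (∑ j, (starRingEnd ℂ) (φ a j) * φ a j) = 1 := fun a => hunit a
  -- P is idempotent
  have hPP : ∀ a, P a * P a = P a := by
    intro a
    ext p q
    rw [Matrix.mul_apply]
    have hterm : ∀ j, P a p j * P a j q =
        (φ a p * (starRingEnd ℂ) (φ a q)) * ((starRingEnd ℂ) (φ a j) * φ a j) := by
      intro j
      simp only [hPdef, outer, Matrix.of_apply]
      ring
    rw [Finset.sum_congr rfl fun j _ => hterm j, ← Finset.mul_sum, hunit' a, mul_one]
    simp [hPdef, outer]
  -- square of the estimator at one site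
  have hMM : ∀ a, Ma a * Ma a = (12 : ℂ) • P a + (4 : ℂ) • 1 := by
    intro a
    simp only [hMadef, sub_mul, mul_sub, smul_mul_assoc, mul_smul_comm, hPP a, one_mul, mul_one]
    module
  -- trace consequence of the design property
  have htr : ∀ X : Matrix (Fin 2) (Fin 2) ℂ,
      (∑ a, cinner (φ a) (X.mulVec (φ a))) = (m : ℂ) * X.trace / 2 := by
    intro X
    have h := congrArg Matrix.trace (hdesign X)
    rw [Matrix.trace_smul, Matrix.trace_sum, Matrix.trace_smul, Matrix.trace_add,
      Matrix.trace_smul, Matrix.trace_one] at h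
    have houter : ∀ a, (P a).trace = 1 := by
      intro a
      rw [Matrix.trace]
      rw [show ∑ j, (P a).diag j = ∑ j, (starRingEnd ℂ) (φ a j) * φ a j from
        Finset.sum_congr rfl fun j _ => by simp [hPdef, outer, Matrix.diag]; ring]
      exact hunit' a
    have houter' : ∀ a, (outer (φ a)).trace = 1 := houter
    simp only [Matrix.trace_smul, houter', smul_eq_mul, mul_one, Fintype.card_fin] at h
    field_simp at h
    linear_combination h / 6
  -- the per-site second-moment identity
  have hsite : ∀ X : Matrix (Fin 2) (Fin 2) ℂ,
      ((1 : ℂ) / m) • ∑ a, cinner (φ a) (X.mulVec (φ a)) • (Ma a * Ma a) =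
        (2 : ℂ) • (X + (2 * X.trace) • 1) := by
    intro X
    have hsum : (∑ a, cinner (φ a) (X.mulVec (φ a)) • (Ma a * Ma a)) =
        (12 : ℂ) • (∑ a, cinner (φ a) (X.mulVec (φ a)) • P a) +
          (∑ a, cinner (φ a) (X.mulVec (φ a))) • ((4 : ℂ) • (1 : Matrix (Fin 2) (Fin 2) ℂ)) := by
      rw [Finset.smul_sum, Finset.sum_smul, ← Finset.sum_add_distrib]
      refine Finset.sum_congr rfl fun a _ => ?_
      rw [hMM a, smul_add, smul_comm]
    rw [hsum, smul_add, smul_comm ((1 : ℂ)/m) ((12 : ℂ)), hdesign X, htr X, smul_smul, smul_smul,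
      smul_smul]
    have hc1 : (12 : ℂ) * (1 / 6) = 2 := by norm_num
    have hc2 : (1 : ℂ) / m * ((m : ℂ) * X.trace / 2) * 4 = 2 * X.trace := by
      field_simp
      ring
    rw [hc1, hc2]
    module
  -- sum/product exchange over the hypercube
  have swap2 : ∀ (f : Fin n → Fin 2 → ℂ),
      (∑ z : Fin n → Fin 2, ∏ k, f k (z k)) = ∏ k, ∑ j, f k j := by
    intro f
    rw [Finset.prod_univ_sum, Fintype.piFinset_univ]
  have swapm : ∀ (f : Fin n → Fin m → ℂ),
      (∑ z : Fin n → Fin m, ∏ k, f k (z k)) = ∏ k, ∑ j, f k j := by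
    intro f
    rw [Finset.prod_univ_sum, Fintype.piFinset_univ]
  -- the inner product against the product state factorizes
  have hps : ∀ i, cinner (ψ i) (F.mulVec (ψ i)) =
      ∏ k, cinner (φ (i k)) ((Fk k).mulVec (φ (i k))) := by
    intro i
    show (∑ x, (starRingEnd ℂ) (ψ i x) * (F.mulVec (ψ i)) x) = _
    have expand : ∀ x, (F.mulVec (ψ i)) x =
        ∑ y : Fin n → Fin 2, ∏ k, (Fk k (x k) (y k) * φ (i k) (y k)) := by
      intro x
      rw [Matrix.mulVec, dotProduct]
      refine Finset.sum_congr rfl fun y _ => ?_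
      rw [hF, hψ, Finset.prod_mul_distrib]
    calc (∑ x, (starRingEnd ℂ) (ψ i x) * (F.mulVec (ψ i)) x)
        = ∑ x : Fin n → Fin 2, ∏ k, ((starRingEnd ℂ) (φ (i k) (x k)) * ∑ q, Fk k (x k) q * φ (i k) q) := by
          refine Finset.sum_congr rfl fun x _ => ?_
          rw [expand x, hψ, map_prod, swap2 (fun k q => Fk k (x k) q * φ (i k) q),
            ← Finset.prod_mul_distrib]
      _ = ∏ k, ∑ p, ((starRingEnd ℂ) (φ (i k) p) * ∑ q, Fk k p q * φ (i k) q) :=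
          swap2 (fun k p => (starRingEnd ℂ) (φ (i k) p) * ∑ q, Fk k p q * φ (i k) q)
      _ = ∏ k, cinner (φ (i k)) ((Fk k).mulVec (φ (i k))) := by
          refine Finset.prod_congr rfl fun k _ => ?_
          rfl
  -- the estimator is a tensor product
  have hν' : ∀ i, ν i = tmat fun k => Ma (i k) := by
    intro i
    ext x y
    rw [hν, tmat_apply]
    refine Finset.prod_congr rfl fun k _ => ?_
    simp only [hMadef, hPdef, outer, Matrix.sub_apply, Matrix.smul_apply, Matrix.of_apply,
      Matrix.one_apply, smul_eq_mul]
    split <;> ring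
  have hνν : ∀ i, ν i * ν i = tmat fun k => Ma (i k) * Ma (i k) := by
    intro i
    rw [hν' i, tmat_mul]
  -- entrywise per-site identity
  have hsiteE : ∀ (k : Fin n) (p q : Fin 2),
      (∑ a, (1 / (m : ℂ)) * (cinner (φ a) ((Fk k).mulVec (φ a)) * (Ma a * Ma a) p q)) =
        ((2 : ℂ) • (Fk k + (2 * (Fk k).trace) • (1 : Matrix (Fin 2) (Fin 2) ℂ))) p q := by
    intro k p q
    have h := congrFun (congrFun (hsite (Fk k)) p) q
    simp only [Matrix.smul_apply, Matrix.sum_apply, smul_eq_mul] at h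
    rw [Finset.mul_sum] at h
    exact h
  -- the main identity
  have hmain : (∑ i, (cinner (ψ i) (F.mulVec (ψ i)) / ((m : ℂ) ^ n)) • (ν i * ν i)) =
      tmat fun k => (2 : ℂ) • (Fk k + (2 * (Fk k).trace) • (1 : Matrix (Fin 2) (Fin 2) ℂ)) := by
    ext x y
    rw [Matrix.sum_apply, tmat_apply]
    calc (∑ i, ((cinner (ψ i) (F.mulVec (ψ i)) / ((m : ℂ) ^ n)) • (ν i * ν i)) x y)
        = ∑ i : Fin n → Fin m, ∏ k, ((1 / (m : ℂ)) *
            (cinner (φ (i k)) ((Fk k).mulVec (φ (i k))) * (Ma (i k) * Ma (i k)) (x k) (y k))) := by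
          refine Finset.sum_congr rfl fun i _ => ?_
          rw [Matrix.smul_apply, smul_eq_mul, hps i, hνν i, tmat_apply]
          rw [Finset.prod_mul_distrib, Finset.prod_mul_distrib, Finset.prod_const,
            Finset.card_univ, Fintype.card_fin]
          field_simp
          rw [one_div_pow]
          field_simp
      _ = ∏ k, ∑ a, ((1 / (m : ℂ)) *
            (cinner (φ a) ((Fk k).mulVec (φ a)) * (Ma a * Ma a) (x k) (y k))) :=
          swapm (fun k a => (1 / (m : ℂ)) *
            (cinner (φ a) ((Fk k).mulVec (φ a)) * (Ma a * Ma a) (x k) (y k)))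
      _ = ∏ k, ((2 : ℂ) • (Fk k + (2 * (Fk k).trace) • (1 : Matrix (Fin 2) (Fin 2) ℂ))) (x k) (y k) :=
          Finset.prod_congr rfl fun k _ => hsiteE k (x k) (y k)
  refine ⟨hmain, ?_⟩
  rw [hmain]
  have hGpsd : ∀ k, ((2 : ℂ) • (Fk k + (2 * (Fk k).trace) • (1 : Matrix (Fin 2) (Fin 2) ℂ))).PosSemidef :=
    fun k => (G_facts (hFk k).1 (hFk k).2).1
  have hG10 : ∀ k, ((10 : ℂ) • 1 -
      (2 : ℂ) • (Fk k + (2 * (Fk k).trace) • (1 : Matrix (Fin 2) (Fin 2) ℂ))).PosSemidef :=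
    fun k => (G_facts (hFk k).1 (hFk k).2).2
  have hb := tmat_bound _ hGpsd hG10
  have hpsd := tmat_posSemidef _ hGpsd
  have hcast : ((((10 : ℝ) ^ n : ℝ)) : ℂ) = (10 : ℂ) ^ n := by push_cast; ring
  exact specNorm_le_of_psd hpsd (by positivity) (by rw [hcast]; exact hb)
end

section
/- Let ψ : Fin M → (Fin d → ℂ) be unit vectors satisfying the 2-design frame identity, and set ν i = (d(d+1) : ℂ) • |ψ i⟩⟨ψ i| − (d : ℂ) • 1. Then for every matrix F : Matrix (Fin d) (Fin d) ℂ, ∑_{i=1}^{M} (⟨ψ i, F (ψ i)⟩ / M) • ν i = F. -/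
/-- The least-squares estimator built from a 2-design reproduces any matrix exactly. -/
theorem lse_two_design_reproduces
    {d M : ℕ} (ψ : Fin M → (Fin d → ℂ))
    (hunit : ∀ i, cinner (ψ i) (ψ i) = 1)
    (hdesign : ∀ X : Matrix (Fin d) (Fin d) ℂ,
      (1 / (M : ℂ)) • ∑ i, cinner (ψ i) (X.mulVec (ψ i)) • outer (ψ i) =
        (1 / ((d : ℂ) * ((d : ℂ) + 1))) • (X + X.trace • (1 : Matrix (Fin d) (Fin d) ℂ)))
    (ν : Fin M → Matrix (Fin d) (Fin d) ℂ)
    (hν : ∀ i, ν i = ((d : ℂ) * ((d : ℂ) + 1)) • outer (ψ i) -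
      (d : ℂ) • (1 : Matrix (Fin d) (Fin d) ℂ))
    (F : Matrix (Fin d) (Fin d) ℂ) :
    ∑ i, (cinner (ψ i) (F.mulVec (ψ i)) / (M : ℂ)) • ν i = F := by
  rcases Nat.eq_zero_or_pos d with hd | hd
  · subst hd
    have : Subsingleton (Matrix (Fin 0) (Fin 0) ℂ) := by
      constructor; intro a b; ext x y; exact x.elim0
    exact Subsingleton.elim _ _
  have hdne : (d : ℂ) ≠ 0 := Nat.cast_ne_zero.mpr hd.ne'
  have hd0 : ((d : ℂ) * ((d : ℂ) + 1)) ≠ 0 := by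
    have : (d : ℂ) ≠ 0 := hdne
    have h1 : ((d : ℂ) + 1) ≠ 0 := by
      intro h
      have : (d : ℂ) = -1 := by linear_combination h
      have := congrArg Complex.re this
      simp at this
      linarith [Nat.cast_nonneg (α := ℝ) d, this]
    exact mul_ne_zero this h1
  set c : Fin M → ℂ := fun i => cinner (ψ i) (F.mulVec (ψ i)) with hc
  have h1 := hdesign F
  -- trace of outer
  have htrouter : ∀ i, (outer (ψ i)).trace = 1 := by
    intro i
    rw [← hunit i]
    simp [Matrix.trace, outer, cinner, Matrix.diag, mul_comm]
  have htr : (1 / (M : ℂ)) * ∑ i, c i = F.trace / (d : ℂ) := by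
    have := congrArg Matrix.trace h1
    simp only [Matrix.trace_smul, Matrix.trace_sum, Matrix.trace_add, Matrix.trace_one,
      htrouter, smul_eq_mul, mul_one, Fintype.card_fin] at this
    rw [Finset.mul_sum] at this ⊢
    rw [this]
    field_simp
    ring
  have key : ∑ i, (c i / (M : ℂ)) • ν i
      = ((d : ℂ) * ((d : ℂ) + 1)) • ((1 / (M : ℂ)) • ∑ i, c i • outer (ψ i))
        - (((1 / (M : ℂ)) * ∑ i, c i) * (d : ℂ)) • (1 : Matrix (Fin d) (Fin d) ℂ) := by
    rw [Finset.smul_sum, Finset.smul_sum]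
    have h2 : (((1 / (M : ℂ)) * ∑ i, c i) * (d : ℂ)) • (1 : Matrix (Fin d) (Fin d) ℂ)
        = ∑ i, (((1 / (M : ℂ)) * c i) * (d : ℂ)) • (1 : Matrix (Fin d) (Fin d) ℂ) := by
      rw [← Finset.sum_smul, Finset.mul_sum, Finset.sum_mul]
    rw [h2, ← Finset.sum_sub_distrib]
    refine Finset.sum_congr rfl fun i _ => ?_
    rw [hν i, smul_sub, smul_smul, smul_smul, smul_smul, smul_smul]
    congr 2 <;> ring
  rw [key, h1, smul_smul, mul_one_div, div_self hd0, one_smul, htr]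
  rw [div_mul_cancel₀ _ hdne]
  abel
end

section
/- Let ψ : Fin M → (Fin d → ℂ) be unit vectors satisfying the 2-design frame identity, and set ν i = (d(d+1) : ℂ) • |ψ i⟩⟨ψ i| − (d : ℂ) • 1. Then: (a) ‖ν i‖ ≤ d² for every i, where ‖·‖ is the ℓ²→ℓ² operator (spectral) norm; (b) for every matrix F with 0 ≤ F ≤ 1 (F positive semidefinite and 1 − F positive semidefinite), ∑_{i=1}^{M} (⟨ψ i, F (ψ i)⟩ / M) • (ν i)² = (d(d−1) : ℂ) • F + (d² : ℂ)·(trace F) • 1; and (c) consequently ‖ ∑_{i=1}^{M} (⟨ψ i, F (ψ i)⟩ / M) • (ν i)² − F² ‖ ≤ d²(d+1). -/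
open scoped ComplexOrder

open Matrix
open scoped Matrix.Norms.L2Operator InnerProductSpace

variable {d : ℕ}

lemma specNorm_eq (A : Matrix (Fin d) (Fin d) ℂ) : specNorm A = ‖A‖ := rfl

lemma outer_conjT (u : Fin d → ℂ) : (outer u)ᴴ = outer u := by
  ext x y
  simp [outer, Matrix.conjTranspose_apply, mul_comm]

lemma outer_mul_outer (u : Fin d → ℂ) (h : cinner u u = 1) :
    outer u * outer u = outer u := by
  ext x y
  simp only [Matrix.mul_apply, outer, Matrix.of_apply]
  calc ∑ k, u x * (starRingEnd ℂ) (u k) * (u k * (starRingEnd ℂ) (u y))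
      = (∑ k, (starRingEnd ℂ) (u k) * u k) * (u x * (starRingEnd ℂ) (u y)) := by
        rw [Finset.sum_mul]; congr 1; ext k; ring
    _ = u x * (starRingEnd ℂ) (u y) := by rw [← cinner, h, one_mul]

lemma trace_outer (u : Fin d → ℂ) : (outer u).trace = cinner u u := by
  simp [Matrix.trace, outer, cinner, Matrix.diag, mul_comm]

lemma norm_one_le : ‖(1 : Matrix (Fin d) (Fin d) ℂ)‖ ≤ 1 := by
  rw [Matrix.cstar_norm_def, _root_.map_one]
  exact ContinuousLinearMap.norm_id_le

lemma norm_outer_le (u : Fin d → ℂ) (h : cinner u u = 1) : ‖outer u‖ ≤ 1 := by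
  have h2 : ‖outer u‖ * ‖outer u‖ = ‖outer u‖ := by
    rw [← Matrix.l2_opNorm_conjTranspose_mul_self, outer_conjT, outer_mul_outer u h]
  nlinarith [norm_nonneg (E := Matrix (Fin d) (Fin d) ℂ) (outer u)]

lemma norm_le_one_of_psd (F : Matrix (Fin d) (Fin d) ℂ) (h1 : F.PosSemidef)
    (h2 : (1 - F).PosSemidef) : ‖F‖ ≤ 1 := by
  open scoped MatrixOrder in obtain ⟨B, rfl⟩ := CStarAlgebra.nonneg_iff_eq_star_mul_self.mp h1.nonneg
  have hB : ‖B‖ ≤ 1 := by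
    rw [Matrix.cstar_norm_def]
    refine ContinuousLinearMap.opNorm_le_bound _ zero_le_one fun x => ?_
    rw [one_mul]
    set T := Matrix.toEuclideanCLM (𝕜 := ℂ) B
    have key : ‖T x‖ ^ 2 ≤ ‖x‖ ^ 2 := by
      rw [← inner_self_eq_norm_sq (𝕜 := ℂ), ← inner_self_eq_norm_sq (𝕜 := ℂ)]
      have h3 : (⟪T x, T x⟫_ℂ : ℂ) ≤ ⟪x, x⟫_ℂ := by
        rw [EuclideanSpace.inner_eq_star_dotProduct, EuclideanSpace.inner_eq_star_dotProduct,
          dotProduct_comm, dotProduct_comm (WithLp.ofLp x)]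
        set y := WithLp.ofLp x with hy
        have hTx : WithLp.ofLp (T x) = B.mulVec y := rfl
        rw [hTx]
        have expand : dotProduct (star (B.mulVec y)) (B.mulVec y)
            = dotProduct (star y) ((Bᴴ * B).mulVec y) := by
          rw [Matrix.star_mulVec, dotProduct_mulVec, dotProduct_mulVec,
            Matrix.vecMul_vecMul]
        rw [expand]
        have := h2.dotProduct_mulVec_nonneg y
        rw [Matrix.sub_mulVec, Matrix.one_mulVec, dotProduct_sub, sub_nonneg] at this
        exact this
      exact (Complex.le_def.mp h3).1
    nlinarith [norm_nonneg (T x), norm_nonneg x]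
  calc ‖Bᴴ * B‖ = ‖B‖ * ‖B‖ := Matrix.l2_opNorm_conjTranspose_mul_self B
    _ ≤ 1 := by nlinarith [norm_nonneg (E := Matrix (Fin d) (Fin d) ℂ) B]

lemma quad_single (A : Matrix (Fin d) (Fin d) ℂ) (i : Fin d) :
    dotProduct (star (Pi.single i 1)) (A *ᵥ Pi.single i 1) = A i i := by
  simp [dotProduct, Matrix.mulVec, Pi.single_apply, Finset.mul_sum, apply_ite,
    mul_comm]

lemma trace_norm_le (F : Matrix (Fin d) (Fin d) ℂ) (h1 : F.PosSemidef)
    (h2 : (1 - F).PosSemidef) : ‖F.trace‖ ≤ (d : ℝ) := by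
  have hnn : (0 : ℂ) ≤ F.trace := by
    refine Finset.sum_nonneg fun i _ => ?_
    have := h1.dotProduct_mulVec_nonneg (Pi.single i 1)
    rwa [quad_single] at this
  have hub : F.trace ≤ (d : ℂ) := by
    have h1le : ∀ i : Fin d, F i i ≤ 1 := by
      intro i
      have := h2.dotProduct_mulVec_nonneg (Pi.single i 1)
      rw [Matrix.sub_mulVec, dotProduct_sub, sub_nonneg, quad_single,
        Matrix.one_mulVec] at this
      calc F i i ≤ _ := this
        _ = (1 : ℂ) := by simp [dotProduct, Pi.single_apply]
    calc F.trace = ∑ i, F i i := rfl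
      _ ≤ ∑ _i : Fin d, (1 : ℂ) := Finset.sum_le_sum fun i _ => h1le i
      _ = (d : ℂ) := by simp
  obtain ⟨hre, him⟩ := Complex.nonneg_iff.mp hnn
  have hz : F.trace = ((F.trace.re : ℝ) : ℂ) := by
    exact Complex.ext rfl him.symm
  rw [hz, Complex.norm_real, Real.norm_eq_abs, abs_of_nonneg hre]
  have := (Complex.le_def.mp hub).1
  simpa using this

/-- Parameters for the matrix Bernstein inequality using global 2-designs. -/
theorem two_design_bernstein_parameters
    {d M : ℕ} (ψ : Fin M → (Fin d → ℂ))
    (hunit : ∀ i, cinner (ψ i) (ψ i) = 1)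
    (hdesign : ∀ X : Matrix (Fin d) (Fin d) ℂ,
      (1 / (M : ℂ)) • ∑ i, cinner (ψ i) (X.mulVec (ψ i)) • outer (ψ i) =
        (1 / ((d : ℂ) * ((d : ℂ) + 1))) • (X + X.trace • (1 : Matrix (Fin d) (Fin d) ℂ)))
    (ν : Fin M → Matrix (Fin d) (Fin d) ℂ)
    (hν : ∀ i, ν i = ((d : ℂ) * ((d : ℂ) + 1)) • outer (ψ i) -
      (d : ℂ) • (1 : Matrix (Fin d) (Fin d) ℂ))
    (F : Matrix (Fin d) (Fin d) ℂ)
    (hF : F.PosSemidef ∧ (1 - F).PosSemidef) :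
    (∀ i, specNorm (ν i) ≤ (d : ℝ) ^ 2) ∧
    (∑ i, (cinner (ψ i) (F.mulVec (ψ i)) / (M : ℂ)) • (ν i * ν i) =
      ((d : ℂ) * ((d : ℂ) - 1)) • F +
        ((d : ℂ) ^ 2 * F.trace) • (1 : Matrix (Fin d) (Fin d) ℂ)) ∧
    specNorm (∑ i, (cinner (ψ i) (F.mulVec (ψ i)) / (M : ℂ)) • (ν i * ν i) - F * F) ≤
      (d : ℝ) ^ 2 * ((d : ℝ) + 1) := by
  obtain ⟨hF1, hF2⟩ := hF
  by_cases hd0 : d = 0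
  · subst hd0
    have hmat : ∀ A B : Matrix (Fin 0) (Fin 0) ℂ, A = B := fun A B => by
      ext i j; exact i.elim0
    have hzero : specNorm (0 : Matrix (Fin 0) (Fin 0) ℂ) = 0 := by
      rw [specNorm, map_zero, norm_zero]
    refine ⟨fun i => ?_, hmat _ _, ?_⟩
    · rw [show ν i = (0 : Matrix (Fin 0) (Fin 0) ℂ) from hmat _ _, hzero]
      norm_num
    · rw [show (∑ i, (cinner (ψ i) (F.mulVec (ψ i)) / ((M : ℕ) : ℂ)) • (ν i * ν i) - F * F)
          = (0 : Matrix (Fin 0) (Fin 0) ℂ) from hmat _ _, hzero]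
      norm_num
  · have hd1 : 1 ≤ d := Nat.one_le_iff_ne_zero.mpr hd0
    have hd1R : (1 : ℝ) ≤ (d : ℝ) := by exact_mod_cast hd1
    have hsq1 : (1 : ℝ) ≤ (d : ℝ) ^ 2 := by nlinarith
    have hdc : (d : ℂ) ≠ 0 := Nat.cast_ne_zero.mpr hd0
    have hdc1 : (d : ℂ) + 1 ≠ 0 := by
      have : ((d + 1 : ℕ) : ℂ) ≠ 0 := Nat.cast_ne_zero.mpr (Nat.succ_ne_zero d)
      simpa [Nat.cast_add] using this
    set c : Fin M → ℂ := fun i => cinner (ψ i) (F.mulVec (ψ i)) with hc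
    set P : Fin M → Matrix (Fin d) (Fin d) ℂ := fun i => outer (ψ i) with hP
    have hPP : ∀ i, P i * P i = P i := fun i => outer_mul_outer _ (hunit i)
    have hν2 : ∀ i, ν i * ν i
        = ((d : ℂ) ^ 2 * ((d : ℂ) ^ 2 - 1)) • P i
          + ((d : ℂ) ^ 2) • (1 : Matrix (Fin d) (Fin d) ℂ) := by
      intro i
      rw [hν i]
      simp only [sub_mul, mul_sub, Matrix.smul_mul, Matrix.mul_smul, smul_smul,
        Matrix.mul_one, Matrix.one_mul, ← hP]
      rw [hPP i]
      match_scalars <;> ring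
    have key : ∑ i, (c i / (M : ℂ)) • P i
        = (1 / ((d : ℂ) * ((d : ℂ) + 1))) • (F + F.trace • 1) := by
      rw [← hdesign F, Finset.smul_sum]
      refine Finset.sum_congr rfl fun i _ => ?_
      rw [smul_smul]
      congr 1
      ring
    have trP : ∀ i, (P i).trace = 1 := fun i => by rw [hP, trace_outer, hunit]
    have tr_key : ∑ i, c i / (M : ℂ) = F.trace / (d : ℂ) := by
      have h := congrArg Matrix.trace key
      rw [Matrix.trace_sum] at h
      simp only [Matrix.trace_smul, trP, smul_eq_mul, mul_one] at h
      rw [Matrix.trace_add, Matrix.trace_smul, Matrix.trace_one] at h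
      rw [h]
      simp only [smul_eq_mul, Fintype.card_fin]
      field_simp
      ring
    have hmain : ∑ i, (c i / (M : ℂ)) • (ν i * ν i)
        = ((d : ℂ) * ((d : ℂ) - 1)) • F
          + ((d : ℂ) ^ 2 * F.trace) • (1 : Matrix (Fin d) (Fin d) ℂ) := by
      have expand : ∑ i, (c i / (M : ℂ)) • (ν i * ν i)
          = ((d : ℂ) ^ 2 * ((d : ℂ) ^ 2 - 1)) • (∑ i, (c i / (M : ℂ)) • P i)
            + (∑ i, c i / (M : ℂ)) • (((d : ℂ) ^ 2) • (1 : Matrix (Fin d) (Fin d) ℂ)) := by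
        rw [Finset.smul_sum, Finset.sum_smul, ← Finset.sum_add_distrib]
        refine Finset.sum_congr rfl fun i _ => ?_
        rw [hν2 i, smul_add, smul_comm]
      rw [expand, key, tr_key]
      match_scalars <;> field_simp <;> ring
    have hHerm : ∀ i, (ν i)ᴴ = ν i := by
      intro i
      rw [hν i]
      simp [Matrix.conjTranspose_sub, Matrix.conjTranspose_smul, outer_conjT]
    have hnorm1 : ‖(1 : Matrix (Fin d) (Fin d) ℂ)‖ ≤ 1 := norm_one_le
    have hnormP : ∀ i, ‖P i‖ ≤ 1 := fun i => norm_outer_le _ (hunit i)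
    have hcoef1 : ‖((d : ℂ) ^ 2 * ((d : ℂ) ^ 2 - 1))‖ = (d : ℝ) ^ 2 * ((d : ℝ) ^ 2 - 1) := by
      rw [show ((d : ℂ) ^ 2 * ((d : ℂ) ^ 2 - 1))
          = ((((d : ℝ) ^ 2 * ((d : ℝ) ^ 2 - 1)) : ℝ) : ℂ) by push_cast; ring,
        Complex.norm_real, Real.norm_eq_abs,
        abs_of_nonneg (mul_nonneg (sq_nonneg _) (by linarith))]
    have hcoef2 : ‖((d : ℂ) ^ 2)‖ = (d : ℝ) ^ 2 := by
      rw [show ((d : ℂ) ^ 2) = (((d : ℝ) ^ 2 : ℝ) : ℂ) by push_cast; ring,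
        Complex.norm_real, Real.norm_eq_abs, abs_of_nonneg (by positivity)]
    have ha : ∀ i, specNorm (ν i) ≤ (d : ℝ) ^ 2 := by
      intro i
      rw [specNorm_eq]
      have hsq : ‖ν i‖ * ‖ν i‖ = ‖ν i * ν i‖ := by
        rw [← Matrix.l2_opNorm_conjTranspose_mul_self, hHerm i]
      have hb : ‖ν i * ν i‖ ≤ (d : ℝ) ^ 2 * (d : ℝ) ^ 2 := by
        rw [hν2 i]
        have hA : ‖((d : ℂ) ^ 2 * ((d : ℂ) ^ 2 - 1)) • P i‖ ≤ (d : ℝ) ^ 2 * ((d : ℝ) ^ 2 - 1) := by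
          rw [norm_smul, hcoef1]
          calc (d : ℝ) ^ 2 * ((d : ℝ) ^ 2 - 1) * ‖P i‖
              ≤ (d : ℝ) ^ 2 * ((d : ℝ) ^ 2 - 1) * 1 :=
                mul_le_mul_of_nonneg_left (hnormP i) (mul_nonneg (sq_nonneg _) (by linarith))
            _ = (d : ℝ) ^ 2 * ((d : ℝ) ^ 2 - 1) := mul_one _
        have hB : ‖((d : ℂ) ^ 2) • (1 : Matrix (Fin d) (Fin d) ℂ)‖ ≤ (d : ℝ) ^ 2 := by
          rw [norm_smul, hcoef2]
          calc (d : ℝ) ^ 2 * ‖(1 : Matrix (Fin d) (Fin d) ℂ)‖ ≤ (d : ℝ) ^ 2 * 1 :=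
                mul_le_mul_of_nonneg_left hnorm1 (sq_nonneg _)
            _ = (d : ℝ) ^ 2 := mul_one _
        calc ‖((d : ℂ) ^ 2 * ((d : ℂ) ^ 2 - 1)) • P i
              + ((d : ℂ) ^ 2) • (1 : Matrix (Fin d) (Fin d) ℂ)‖
            ≤ ‖((d : ℂ) ^ 2 * ((d : ℂ) ^ 2 - 1)) • P i‖
              + ‖((d : ℂ) ^ 2) • (1 : Matrix (Fin d) (Fin d) ℂ)‖ := norm_add_le _ _
          _ ≤ (d : ℝ) ^ 2 * ((d : ℝ) ^ 2 - 1) + (d : ℝ) ^ 2 := add_le_add hA hB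
          _ ≤ (d : ℝ) ^ 2 * (d : ℝ) ^ 2 := by nlinarith
      nlinarith [norm_nonneg (E := Matrix (Fin d) (Fin d) ℂ) (ν i), sq_nonneg (‖ν i‖ - (d : ℝ) ^ 2)]
    refine ⟨ha, hmain, ?_⟩
    rw [specNorm_eq, hmain]
    have hFn : ‖F‖ ≤ 1 := norm_le_one_of_psd F hF1 hF2
    have htr : ‖F.trace‖ ≤ (d : ℝ) := trace_norm_le F hF1 hF2
    have hcoef3 : ‖((d : ℂ) * ((d : ℂ) - 1))‖ = (d : ℝ) * ((d : ℝ) - 1) := by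
      rw [show ((d : ℂ) * ((d : ℂ) - 1)) = ((((d : ℝ) * ((d : ℝ) - 1)) : ℝ) : ℂ) by
        push_cast; ring, Complex.norm_real, Real.norm_eq_abs,
        abs_of_nonneg (mul_nonneg (by linarith) (by linarith))]
    have t1 : ‖((d : ℂ) * ((d : ℂ) - 1)) • F‖ ≤ (d : ℝ) * ((d : ℝ) - 1) := by
      rw [norm_smul, hcoef3]
      calc (d : ℝ) * ((d : ℝ) - 1) * ‖F‖ ≤ (d : ℝ) * ((d : ℝ) - 1) * 1 :=
            mul_le_mul_of_nonneg_left hFn (mul_nonneg (by linarith) (by linarith))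
        _ = (d : ℝ) * ((d : ℝ) - 1) := mul_one _
    have t2 : ‖((d : ℂ) ^ 2 * F.trace) • (1 : Matrix (Fin d) (Fin d) ℂ)‖
        ≤ (d : ℝ) ^ 2 * (d : ℝ) := by
      rw [norm_smul]
      have h4 : ‖((d : ℂ) ^ 2 * F.trace)‖ ≤ (d : ℝ) ^ 2 * (d : ℝ) := by
        rw [norm_mul, hcoef2]
        exact mul_le_mul_of_nonneg_left htr (sq_nonneg _)
      calc ‖((d : ℂ) ^ 2 * F.trace)‖ * ‖(1 : Matrix (Fin d) (Fin d) ℂ)‖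
          ≤ ((d : ℝ) ^ 2 * (d : ℝ)) * 1 :=
            mul_le_mul h4 hnorm1 (norm_nonneg _) (by positivity)
        _ = (d : ℝ) ^ 2 * (d : ℝ) := mul_one _
    have t3 : ‖F * F‖ ≤ 1 := by
      calc ‖F * F‖ ≤ ‖F‖ * ‖F‖ := norm_mul_le _ _
        _ ≤ 1 * 1 := mul_le_mul hFn hFn (norm_nonneg _) zero_le_one
        _ = 1 := mul_one _
    calc ‖((d : ℂ) * ((d : ℂ) - 1)) • F + ((d : ℂ) ^ 2 * F.trace) • (1 : Matrix (Fin d) (Fin d) ℂ)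
          - F * F‖
        ≤ ‖((d : ℂ) * ((d : ℂ) - 1)) • F
            + ((d : ℂ) ^ 2 * F.trace) • (1 : Matrix (Fin d) (Fin d) ℂ)‖ + ‖F * F‖ :=
          norm_sub_le _ _
      _ ≤ (‖((d : ℂ) * ((d : ℂ) - 1)) • F‖
            + ‖((d : ℂ) ^ 2 * F.trace) • (1 : Matrix (Fin d) (Fin d) ℂ)‖) + ‖F * F‖ :=
          add_le_add_left (norm_add_le _ _) _
      _ ≤ ((d : ℝ) * ((d : ℝ) - 1) + (d : ℝ) ^ 2 * (d : ℝ)) + 1 :=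
          add_le_add (add_le_add t1 t2) t3
      _ ≤ (d : ℝ) ^ 2 * ((d : ℝ) + 1) := by nlinarith
end

section
/- Let d be even with d ≥ 2, let P : Matrix (Fin d) (Fin d) ℂ be an orthogonal projector of rank d/2, let 0 ≤ ε ≤ 1/2, let L ≥ 1, and let U, V be unitary d×d matrices. Define the (L+2)-outcome POVMs E_U and E_V by: E_U^k = (1/(2L)) • 1 for k = 1, …, L; E_U^{L+1} = ((1+ε)/4) • 1 − (ε/2) • (U P U†); E_U^{L+2} = ((1−ε)/4) • 1 + (ε/2) • (U P U†); and analogously for E_V with V in place of U. Then E_U and E_V are POVMs, and d_op(E_U, E_V) = (ε/2) · ‖U P U† − V P V†‖, where ‖·‖ is the ℓ²→ℓ² operator (spectral) norm. -/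
open scoped Matrix ComplexOrder
set_option synthInstance.maxHeartbeats 1000000
set_option maxHeartbeats 1000000

noncomputable def dOp {ι : Type*} {L : ℕ} [Fintype ι] [DecidableEq ι]
    (A B : Fin L → Matrix ι ι ℂ) : ℝ :=
  ⨆ x : Finset (Fin L), specNorm (∑ j ∈ x, (A j - B j))

/-- The `(L+2)`-outcome POVM used in the packing construction for the
operational-distance lower bound. -/
noncomputable def povmOp (d L : ℕ) (ε : ℝ) (P U : Matrix (Fin d) (Fin d) ℂ) :
    Fin (L + 2) → Matrix (Fin d) (Fin d) ℂ := fun k =>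
  if (k : ℕ) < L then (1 / (2 * (L : ℂ))) • (1 : Matrix (Fin d) (Fin d) ℂ)
  else if (k : ℕ) = L then
    (((1 + ε : ℝ) : ℂ) / 4) • (1 : Matrix (Fin d) (Fin d) ℂ) -
      (((ε : ℝ) : ℂ) / 2) • (U * P * Uᴴ)
  else
    (((1 - ε : ℝ) : ℂ) / 4) • (1 : Matrix (Fin d) (Fin d) ℂ) +
      (((ε : ℝ) : ℂ) / 2) • (U * P * Uᴴ)

-- auxiliary lemmas
lemma specNorm_nonneg {ι : Type*} [Fintype ι] [DecidableEq ι] (A : Matrix ι ι ℂ) :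
    0 ≤ specNorm A := norm_nonneg _

lemma specNorm_zero {ι : Type*} [Fintype ι] [DecidableEq ι] :
    specNorm (0 : Matrix ι ι ℂ) = 0 := by
  simp [specNorm]

lemma specNorm_neg {ι : Type*} [Fintype ι] [DecidableEq ι] (A : Matrix ι ι ℂ) :
    specNorm (-A) = specNorm A := by
  simp [specNorm]

lemma specNorm_real_smul {ι : Type*} [Fintype ι] [DecidableEq ι] (A : Matrix ι ι ℂ) (c : ℝ) :
    specNorm (((c : ℂ)) • A) = |c| * specNorm A := by
  rw [specNorm, map_smul]
  rw [norm_smul ((c : ℂ)) (Matrix.toEuclideanCLM (𝕜 := ℂ) A), Complex.norm_real,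
    Real.norm_eq_abs, specNorm]

lemma psd_real_smul {ι : Type*} [Fintype ι] [DecidableEq ι] {A : Matrix ι ι ℂ}
    (hA : A.PosSemidef) {c : ℝ} (hc : 0 ≤ c) : (((c : ℂ)) • A).PosSemidef := by
  constructor
  · rw [Matrix.IsHermitian, Matrix.conjTranspose_smul, hA.1.eq]
    congr 1
    simp
  · intro x
    exact (hA.smul (Complex.zero_le_real.mpr hc)).2 x

lemma unitary_mul_conjTranspose {d : ℕ} {W : Matrix (Fin d) (Fin d) ℂ}
    (hW : W ∈ Matrix.unitaryGroup (Fin d) ℂ) : W * Wᴴ = 1 := by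
  rw [← Matrix.star_eq_conjTranspose]
  exact (Matrix.mem_unitaryGroup_iff.mp hW)

lemma proj_psd {d : ℕ} {P W : Matrix (Fin d) (Fin d) ℂ}
    (hP1 : Pᴴ = P) (hP2 : P * P = P) :
    (W * P * Wᴴ).PosSemidef := by
  have h : W * P * Wᴴ = (W * P) * (W * P)ᴴ := by
    rw [Matrix.conjTranspose_mul, hP1, ← mul_assoc, mul_assoc W P P, hP2]
  rw [h]
  exact Matrix.posSemidef_self_mul_conjTranspose _

lemma proj_compl_psd {d : ℕ} {P W : Matrix (Fin d) (Fin d) ℂ}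
    (hW : W ∈ Matrix.unitaryGroup (Fin d) ℂ) (hP1 : Pᴴ = P) (hP2 : P * P = P) :
    ((1 : Matrix (Fin d) (Fin d) ℂ) - W * P * Wᴴ).PosSemidef := by
  have h1 : ((1 : Matrix (Fin d) (Fin d) ℂ) - P)ᴴ = 1 - P := by
    rw [Matrix.conjTranspose_sub, Matrix.conjTranspose_one, hP1]
  have h2 : ((1 : Matrix (Fin d) (Fin d) ℂ) - P) * (1 - P) = 1 - P := by
    rw [mul_sub, sub_mul, sub_mul, hP2]
    simp
  have h : (1 : Matrix (Fin d) (Fin d) ℂ) - W * P * Wᴴ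
      = (W * (1 - P)) * (W * (1 - P))ᴴ := by
    rw [Matrix.conjTranspose_mul, h1, ← mul_assoc, mul_assoc W (1 - P) (1 - P), h2,
      mul_sub, sub_mul, mul_one, unitary_mul_conjTranspose hW]
  rw [h]
  exact Matrix.posSemidef_self_mul_conjTranspose _

lemma povmOp_isPOVM {d L : ℕ} (hL : 1 ≤ L) {ε : ℝ} (hε0 : 0 ≤ ε) (hε : ε ≤ 1 / 2)
    {P W : Matrix (Fin d) (Fin d) ℂ}
    (hP1 : Pᴴ = P) (hP2 : P * P = P) (hW : W ∈ Matrix.unitaryGroup (Fin d) ℂ) :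
    IsPOVM (povmOp d L ε P W) := by
  have hLne : (L : ℂ) ≠ 0 := Nat.cast_ne_zero.mpr (by omega)
  set Q : Matrix (Fin d) (Fin d) ℂ := W * P * Wᴴ with hQdef
  have hQ : Q.PosSemidef := proj_psd hP1 hP2
  have hQc : ((1 : Matrix (Fin d) (Fin d) ℂ) - Q).PosSemidef := proj_compl_psd hW hP1 hP2
  constructor
  · intro j
    unfold povmOp
    split_ifs with h1 h2
    · have : (1 / (2 * (L : ℂ))) = (((1 / (2 * (L : ℝ))) : ℝ) : ℂ) := by push_cast; ring
      rw [this]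
      exact psd_real_smul Matrix.PosSemidef.one (by positivity)
    · have he : (((1 + ε : ℝ) : ℂ) / 4) • (1 : Matrix (Fin d) (Fin d) ℂ) -
          (((ε : ℝ) : ℂ) / 2) • Q
          = ((((1 - ε) / 4 : ℝ)) : ℂ) • (1 : Matrix (Fin d) (Fin d) ℂ) +
            ((((ε / 2 : ℝ)) : ℂ)) • (1 - Q) := by
        push_cast
        module
      rw [he]
      exact (psd_real_smul Matrix.PosSemidef.one (by linarith)).add
        (psd_real_smul hQc (by linarith))
    · have he : (((1 - ε : ℝ) : ℂ) / 4) • (1 : Matrix (Fin d) (Fin d) ℂ) +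
          (((ε : ℝ) : ℂ) / 2) • Q
          = ((((1 - ε) / 4 : ℝ)) : ℂ) • (1 : Matrix (Fin d) (Fin d) ℂ) +
            ((((ε / 2 : ℝ)) : ℂ)) • Q := by
        push_cast
        module
      rw [he]
      exact (psd_real_smul Matrix.PosSemidef.one (by linarith)).add
        (psd_real_smul hQ (by linarith))
  · rw [Fin.sum_univ_castSucc, Fin.sum_univ_castSucc]
    have hlast1 : ((Fin.last (L + 1)) : ℕ) = L + 1 := rfl
    have hlast2 : (((Fin.last L).castSucc : Fin (L + 2)) : ℕ) = L := rfl
    have e1 : povmOp d L ε P W (Fin.last (L + 1))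
        = (((1 - ε : ℝ) : ℂ) / 4) • (1 : Matrix (Fin d) (Fin d) ℂ) +
            (((ε : ℝ) : ℂ) / 2) • Q := by
      unfold povmOp
      rw [hlast1]
      simp [hQdef]
    have e2 : povmOp d L ε P W ((Fin.last L).castSucc)
        = (((1 + ε : ℝ) : ℂ) / 4) • (1 : Matrix (Fin d) (Fin d) ℂ) -
            (((ε : ℝ) : ℂ) / 2) • Q := by
      unfold povmOp
      rw [hlast2]
      simp [hQdef]
    have e3 : ∀ j : Fin L, povmOp d L ε P W (j.castSucc.castSucc)
        = (1 / (2 * (L : ℂ))) • (1 : Matrix (Fin d) (Fin d) ℂ) := by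
      intro j
      unfold povmOp
      have : ((j.castSucc.castSucc : Fin (L + 2)) : ℕ) = (j : ℕ) := rfl
      rw [this, if_pos j.isLt]
    rw [e1, e2, Finset.sum_congr rfl (fun j _ => e3 j), Finset.sum_const,
      Finset.card_univ, Fintype.card_fin, ← Nat.cast_smul_eq_nsmul ℂ, smul_smul]
    have hc : (L : ℂ) * (1 / (2 * (L : ℂ))) = 1 / 2 := by
      field_simp
    rw [hc]
    push_cast
    module

lemma povmOp_diff {d L : ℕ} {ε : ℝ} {P U V : Matrix (Fin d) (Fin d) ℂ} (j : Fin (L + 2)) :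
    povmOp d L ε P U j - povmOp d L ε P V j =
      (if j = (⟨L, by omega⟩ : Fin (L + 2)) then
        -((((ε : ℝ) : ℂ) / 2) • (U * P * Uᴴ - V * P * Vᴴ))
      else if j = (⟨L + 1, by omega⟩ : Fin (L + 2)) then
        (((ε : ℝ) : ℂ) / 2) • (U * P * Uᴴ - V * P * Vᴴ)
      else 0) := by
  have hvL : (((⟨L, by omega⟩ : Fin (L + 2))) : ℕ) = L := rfl
  have hvL1 : (((⟨L + 1, by omega⟩ : Fin (L + 2))) : ℕ) = L + 1 := rfl
  unfold povmOp
  by_cases h1 : (j : ℕ) < L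
  · rw [if_pos h1, if_pos h1, sub_self,
      if_neg (fun h => by rw [Fin.ext_iff, hvL] at h; omega),
      if_neg (fun h => by rw [Fin.ext_iff, hvL1] at h; omega)]
  · by_cases h2 : (j : ℕ) = L
    · have hj : j = (⟨L, by omega⟩ : Fin (L + 2)) := Fin.ext h2
      rw [if_neg h1, if_neg h1, if_pos h2, if_pos h2, if_pos hj, smul_sub]
      abel
    · have hj1 : j ≠ (⟨L, by omega⟩ : Fin (L + 2)) := fun h => by rw [Fin.ext_iff, hvL] at h; exact h2 h
      have h3 : (j : ℕ) = L + 1 := by have := j.isLt; omega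
      have hj2 : j = (⟨L + 1, by omega⟩ : Fin (L + 2)) := Fin.ext h3
      rw [if_neg h1, if_neg h1, if_neg h2, if_neg h2, if_neg hj1, if_pos hj2, smul_sub]
      abel

lemma povmOp_dop {d L : ℕ} (hL : 1 ≤ L) {ε : ℝ} (hε0 : 0 ≤ ε)
    (P U V : Matrix (Fin d) (Fin d) ℂ) :
    dOp (povmOp d L ε P U) (povmOp d L ε P V) =
      (ε / 2) * specNorm (U * P * Uᴴ - V * P * Vᴴ) := by
  set D := U * P * Uᴴ - V * P * Vᴴ with hD
  set e : ℂ := (((ε : ℝ) : ℂ) / 2) with he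
  set iL : Fin (L + 2) := ⟨L, by omega⟩ with hiL
  set iL1 : Fin (L + 2) := ⟨L + 1, by omega⟩ with hiL1
  have hne : iL ≠ iL1 := by
    simp [hiL, hiL1, Fin.ext_iff]
  -- the summand and the sum over a finset
  have hsum : ∀ x : Finset (Fin (L + 2)),
      (∑ j ∈ x, (povmOp d L ε P U j - povmOp d L ε P V j)) =
        (if iL ∈ x then -(e • D) else 0) + (if iL1 ∈ x then e • D else 0) := by
    intro x
    have hpt : ∀ j : Fin (L + 2), povmOp d L ε P U j - povmOp d L ε P V j =
        (if j = iL then -(e • D) else 0) + (if j = iL1 then e • D else 0) := by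
      intro j
      rw [povmOp_diff j]
      by_cases h1 : j = iL
      · rw [if_pos h1, if_pos h1, if_neg (h1 ▸ hne), add_zero]
      · rw [if_neg h1, if_neg h1, zero_add]
    rw [Finset.sum_congr rfl (fun j _ => hpt j), Finset.sum_add_distrib,
      Finset.sum_ite_eq' x iL (fun _ => -(e • D)),
      Finset.sum_ite_eq' x iL1 (fun _ => e • D)]
  have heD : specNorm (e • D) = (ε / 2) * specNorm D := by
    have : e = (((ε / 2 : ℝ)) : ℂ) := by rw [he]; push_cast; ring
    rw [this, specNorm_real_smul, abs_of_nonneg (by linarith)]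
  have hs : 0 ≤ (ε / 2) * specNorm D :=
    mul_nonneg (by linarith) (specNorm_nonneg D)
  have hval : ∀ x : Finset (Fin (L + 2)),
      specNorm (∑ j ∈ x, (povmOp d L ε P U j - povmOp d L ε P V j)) ≤
        (ε / 2) * specNorm D := by
    intro x
    rw [hsum x]
    by_cases h1 : iL ∈ x <;> by_cases h2 : iL1 ∈ x <;>
      simp only [h1, h2, if_true, if_false, ite_true, ite_false, add_zero, zero_add,
        neg_add_cancel, add_zero]
    · rw [specNorm_zero]; exact hs
    · rw [specNorm_neg, heD]
    · rw [heD]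
    · rw [specNorm_zero]; exact hs
  rw [dOp]
  apply le_antisymm
  · exact ciSup_le hval
  · have hx1 : specNorm (∑ j ∈ ({iL1} : Finset (Fin (L + 2))),
        (povmOp d L ε P U j - povmOp d L ε P V j)) = (ε / 2) * specNorm D := by
      rw [hsum, if_neg (by simp [hne]), if_pos (Finset.mem_singleton_self iL1), zero_add, heD]
    calc (ε / 2) * specNorm D
        = specNorm (∑ j ∈ ({iL1} : Finset (Fin (L + 2))),
            (povmOp d L ε P U j - povmOp d L ε P V j)) := hx1.symm
      _ ≤ _ := le_ciSup (f := fun x : Finset (Fin (L + 2)) =>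
            specNorm (∑ j ∈ x, (povmOp d L ε P U j - povmOp d L ε P V j)))
          (Set.Finite.bddAbove (Set.finite_range _)) ({iL1} : Finset (Fin (L + 2)))


/-- The packing POVMs are genuine POVMs, and their operational distance is
exactly `(ε/2)·‖U P U† − V P V†‖`. -/
theorem povmOp_isPOVM_and_dop
    {d L : ℕ} (hd : 2 ≤ d) (hdeven : 2 ∣ d) (hL : 1 ≤ L)
    (ε : ℝ) (hε0 : 0 ≤ ε) (hε : ε ≤ 1 / 2)
    (P : Matrix (Fin d) (Fin d) ℂ)
    (hP1 : Pᴴ = P) (hP2 : P * P = P) (hPr : (P.trace).re = (d : ℝ) / 2)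
    (U V : Matrix (Fin d) (Fin d) ℂ)
    (hU : U ∈ Matrix.unitaryGroup (Fin d) ℂ) (hV : V ∈ Matrix.unitaryGroup (Fin d) ℂ) :
    IsPOVM (povmOp d L ε P U) ∧ IsPOVM (povmOp d L ε P V) ∧
      dOp (povmOp d L ε P U) (povmOp d L ε P V) =
        (ε / 2) * specNorm (U * P * Uᴴ - V * P * Vᴴ) :=
  ⟨povmOp_isPOVM hL hε0 hε hP1 hP2 hU, povmOp_isPOVM hL hε0 hε hP1 hP2 hV,
    povmOp_dop hL hε0 P U V⟩
end

section
/- Let d ≥ 1, let μ be the Haar probability measure on the unitary group U(d) = Matrix.unitaryGroup (Fin d) ℂ, and let A : Matrix (Fin d) (Fin d) ℂ be any matrix. Then ∫ U, (U · A · U†) dμ(U) = ((trace A)/d) • 1, where the integral of a matrix-valued function is taken entrywise and U† denotes the conjugate transpose of (the matrix underlying) the unitary U. -/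
open MeasureTheory
open scoped Matrix

noncomputable instance matrixMeasurableSpace {m n : Type*} : MeasurableSpace (Matrix m n ℂ) :=
  (inferInstance : MeasurableSpace (m → n → ℂ))

instance matrixBorelSpace {m n : Type*} [Countable m] [Countable n] :
    BorelSpace (Matrix m n ℂ) := Pi.borelSpace

instance unitaryBorelSpace {d : ℕ} : BorelSpace (Matrix.unitaryGroup (Fin d) ℂ) :=
  Subtype.borelSpace _

section aux
variable {d : ℕ}

lemma unitary_entry_norm_le_one (U : Matrix.unitaryGroup (Fin d) ℂ) (i j : Fin d) :
    ‖(U : Matrix (Fin d) (Fin d) ℂ) i j‖ ≤ 1 := by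
  have h := Matrix.UnitaryGroup.star_mul_self U
  have h1 := congrFun (congrFun h j) j
  rw [Matrix.star_eq_conjTranspose] at h1
  have h2 : ((U : Matrix (Fin d) (Fin d) ℂ)ᴴ * (U : Matrix (Fin d) (Fin d) ℂ)) j j
      = ∑ k, (starRingEnd ℂ) ((U : Matrix (Fin d) (Fin d) ℂ) k j)
          * (U : Matrix (Fin d) (Fin d) ℂ) k j := by
    rw [Matrix.mul_apply]
    refine Finset.sum_congr rfl fun k _ => ?_
    rw [Matrix.conjTranspose_apply]
    rfl
  have h3 : (1 : Matrix (Fin d) (Fin d) ℂ) j j = 1 := Matrix.one_apply_eq j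
  have h4 : ∑ k, ((Complex.normSq ((U : Matrix (Fin d) (Fin d) ℂ) k j) : ℝ) : ℂ) = 1 := by
    rw [← h3, ← h1, h2]
    refine Finset.sum_congr rfl fun k _ => ?_
    rw [mul_comm, Complex.mul_conj]
  have h5 : ∑ k, Complex.normSq ((U : Matrix (Fin d) (Fin d) ℂ) k j) = 1 := by
    have := h4
    push_cast at this
    exact_mod_cast this
  have h6 : Complex.normSq ((U : Matrix (Fin d) (Fin d) ℂ) i j) ≤ 1 := by
    rw [← h5]
    exact Finset.single_le_sum
      (f := fun k => Complex.normSq ((U : Matrix (Fin d) (Fin d) ℂ) k j))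
      (fun k _ => Complex.normSq_nonneg _) (Finset.mem_univ i)
  have h7 : ‖(U : Matrix (Fin d) (Fin d) ℂ) i j‖ ^ 2 ≤ 1 := by
    rw [Complex.sq_norm]
    exact h6
  nlinarith [norm_nonneg ((U : Matrix (Fin d) (Fin d) ℂ) i j)]

lemma cont_entry (A : Matrix (Fin d) (Fin d) ℂ) (x y : Fin d) :
    Continuous fun U : Matrix.unitaryGroup (Fin d) ℂ =>
      ((U : Matrix (Fin d) (Fin d) ℂ) * A * (U : Matrix (Fin d) (Fin d) ℂ)ᴴ) x y := by
  have hcoe : Continuous fun U : Matrix.unitaryGroup (Fin d) ℂ =>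
      (U : Matrix (Fin d) (Fin d) ℂ) := continuous_subtype_val
  have h : Continuous fun U : Matrix.unitaryGroup (Fin d) ℂ =>
      (U : Matrix (Fin d) (Fin d) ℂ) * A * (U : Matrix (Fin d) (Fin d) ℂ)ᴴ :=
    (hcoe.matrix_mul continuous_const).matrix_mul hcoe.matrix_conjTranspose
  exact (continuous_apply y).comp ((continuous_apply x).comp h)

lemma integrable_entry (μ : Measure (Matrix.unitaryGroup (Fin d) ℂ)) [IsProbabilityMeasure μ]
    (A : Matrix (Fin d) (Fin d) ℂ) (x y : Fin d) :
    Integrable (fun U : Matrix.unitaryGroup (Fin d) ℂ =>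
      ((U : Matrix (Fin d) (Fin d) ℂ) * A * (U : Matrix (Fin d) (Fin d) ℂ)ᴴ) x y) μ := by
  refine ⟨(cont_entry A x y).aestronglyMeasurable, ?_⟩
  apply HasFiniteIntegral.of_bounded (C := ∑ l : Fin d, ∑ k : Fin d, ‖A k l‖)
  filter_upwards with U
  have hU := unitary_entry_norm_le_one U
  calc ‖((U : Matrix (Fin d) (Fin d) ℂ) * A * (U : Matrix (Fin d) (Fin d) ℂ)ᴴ) x y‖
      = ‖∑ l, ((U : Matrix (Fin d) (Fin d) ℂ) * A) x l
          * (U : Matrix (Fin d) (Fin d) ℂ)ᴴ l y‖ := by rw [Matrix.mul_apply]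
    _ ≤ ∑ l, ‖((U : Matrix (Fin d) (Fin d) ℂ) * A) x l
          * (U : Matrix (Fin d) (Fin d) ℂ)ᴴ l y‖ := norm_sum_le _ _
    _ ≤ ∑ l, ∑ k, ‖A k l‖ := by
        refine Finset.sum_le_sum fun l _ => ?_
        rw [norm_mul, Matrix.conjTranspose_apply, norm_star, Matrix.mul_apply]
        calc ‖∑ k, (U : Matrix (Fin d) (Fin d) ℂ) x k * A k l‖
              * ‖(U : Matrix (Fin d) (Fin d) ℂ) y l‖
            ≤ (∑ k, ‖A k l‖) * 1 := by
              apply mul_le_mul _ (hU y l) (norm_nonneg _)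
                (Finset.sum_nonneg fun k _ => norm_nonneg _)
              calc ‖∑ k, (U : Matrix (Fin d) (Fin d) ℂ) x k * A k l‖
                  ≤ ∑ k, ‖(U : Matrix (Fin d) (Fin d) ℂ) x k * A k l‖ := norm_sum_le _ _
                _ ≤ ∑ k, ‖A k l‖ := by
                    refine Finset.sum_le_sum fun k _ => ?_
                    rw [norm_mul]
                    calc ‖(U : Matrix (Fin d) (Fin d) ℂ) x k‖ * ‖A k l‖
                        ≤ 1 * ‖A k l‖ := by
                          exact mul_le_mul_of_nonneg_right (hU x k) (norm_nonneg _)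
                      _ = ‖A k l‖ := one_mul _
          _ = ∑ k, ‖A k l‖ := mul_one _

lemma scalar_of_commute (hd : 1 ≤ d) (M : Matrix (Fin d) (Fin d) ℂ)
    (h : ∀ V : Matrix.unitaryGroup (Fin d) ℂ,
      (V : Matrix (Fin d) (Fin d) ℂ) * M = M * (V : Matrix (Fin d) (Fin d) ℂ)) :
    M = (M.trace / (d : ℂ)) • 1 := by
  classical
  have hoff : ∀ i j : Fin d, i ≠ j → M i j = 0 := by
    intro i j hij
    set δ : Fin d → ℂ := fun k => if k = i then -1 else 1 with hδdef
    have hV : Matrix.diagonal δ ∈ Matrix.unitaryGroup (Fin d) ℂ := by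
      rw [Matrix.mem_unitaryGroup_iff, Matrix.star_eq_conjTranspose,
        Matrix.diagonal_conjTranspose, Matrix.diagonal_mul_diagonal]
      have hdd : (fun k => δ k * star δ k) = fun _ : Fin d => (1 : ℂ) := by
        funext k
        by_cases hk : k = i <;> simp [hδdef, hk]
      rw [hdd]
      exact Matrix.diagonal_one
    have hcomm := h ⟨Matrix.diagonal δ, hV⟩
    have he := Matrix.ext_iff.mpr hcomm i j
    simp only [Matrix.diagonal_mul, Matrix.mul_diagonal] at he
    have hji : j ≠ i := Ne.symm hij
    have hδi : δ i = -1 := by simp [hδdef]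
    have hδj : δ j = 1 := by simp [hδdef, hji]
    rw [hδi, hδj] at he
    -- he : -1 * M i j = M i j * 1
    have he' : -M i j = M i j := by linear_combination he
    linear_combination -he' / 2
  have hdiag : ∀ i j : Fin d, M i i = M j j := by
    intro i j
    by_cases hij : i = j
    · rw [hij]
    set σ := Equiv.swap i j with hσ
    set P : Matrix (Fin d) (Fin d) ℂ := σ.toPEquiv.toMatrix with hP
    have hPU : P ∈ Matrix.unitaryGroup (Fin d) ℂ := by
      rw [Matrix.mem_unitaryGroup_iff, Matrix.star_eq_conjTranspose]
      have h1 : Pᴴ = (σ.symm.toPEquiv.toMatrix : Matrix (Fin d) (Fin d) ℂ) := by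
        rw [Equiv.toPEquiv_symm, PEquiv.toMatrix_symm]
        ext a b
        simp [hP, Matrix.conjTranspose_apply, Matrix.transpose_apply,
          PEquiv.toMatrix_apply, apply_ite (starRingEnd ℂ)]
      rw [h1, ← PEquiv.toMatrix_trans, ← Equiv.toPEquiv_trans, Equiv.self_trans_symm,
        Equiv.toPEquiv_refl, PEquiv.toMatrix_refl]
    have hcomm := h ⟨P, hPU⟩
    have h2 : M.submatrix σ id = M.submatrix id σ.symm := by
      rw [← PEquiv.toMatrix_toPEquiv_mul, ← PEquiv.mul_toMatrix_toPEquiv]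
      exact hcomm
    have h3 := Matrix.ext_iff.mpr h2 i j
    simp only [Matrix.submatrix_apply, id] at h3
    rw [hσ] at h3
    rw [Equiv.swap_apply_left] at h3
    rw [show (Equiv.swap i j).symm = Equiv.swap i j from Equiv.symm_swap i j] at h3
    rw [Equiv.swap_apply_right] at h3
    exact h3.symm
  have hd0 : (d : ℂ) ≠ 0 := Nat.cast_ne_zero.mpr (by omega)
  have htr : ∀ i : Fin d, M.trace = (d : ℂ) * M i i := by
    intro i
    rw [Matrix.trace]
    calc ∑ j, M.diag j = ∑ _j : Fin d, M i i :=
          Finset.sum_congr rfl fun j _ => hdiag j i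
      _ = (d : ℂ) * M i i := by
          rw [Finset.sum_const, Finset.card_univ, Fintype.card_fin, nsmul_eq_mul]
  ext i j
  by_cases hij : i = j
  · subst hij
    rw [Matrix.smul_apply, Matrix.one_apply_eq, smul_eq_mul, mul_one, htr i,
      mul_comm, mul_div_assoc, div_self hd0, mul_one]
  · rw [Matrix.smul_apply, Matrix.one_apply_ne hij, smul_eq_mul, mul_zero, hoff i j hij]
end aux

/-- Averaging a conjugated matrix over the Haar measure on the unitary group
yields the normalized trace times the identity. -/
theorem haar_average_conjugation
    {d : ℕ} (hd : 1 ≤ d)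
    (μ : Measure (Matrix.unitaryGroup (Fin d) ℂ))
    [μ.IsHaarMeasure] [IsProbabilityMeasure μ]
    (A : Matrix (Fin d) (Fin d) ℂ) :
    (Matrix.of fun x y =>
        ∫ U : Matrix.unitaryGroup (Fin d) ℂ,
          ((U : Matrix (Fin d) (Fin d) ℂ) * A * (U : Matrix (Fin d) (Fin d) ℂ)ᴴ) x y ∂μ) =
      (A.trace / (d : ℂ)) • (1 : Matrix (Fin d) (Fin d) ℂ) := by
  classical
  set f : Matrix.unitaryGroup (Fin d) ℂ → Matrix (Fin d) (Fin d) ℂ :=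
    fun U => (U : Matrix (Fin d) (Fin d) ℂ) * A * (U : Matrix (Fin d) (Fin d) ℂ)ᴴ with hf
  set M : Matrix (Fin d) (Fin d) ℂ :=
    Matrix.of (fun x y => ∫ U : Matrix.unitaryGroup (Fin d) ℂ, f U x y ∂μ) with hM
  have hMapply : ∀ x y, M x y = ∫ U, f U x y ∂μ := fun x y => rfl
  have hint : ∀ x y, Integrable (fun U => f U x y) μ := fun x y => integrable_entry μ A x y
  -- commuting
  have hcomm : ∀ V : Matrix.unitaryGroup (Fin d) ℂ,
      (V : Matrix (Fin d) (Fin d) ℂ) * M = M * (V : Matrix (Fin d) (Fin d) ℂ) := by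
    intro V
    have expand : ∀ (N : Matrix (Fin d) (Fin d) ℂ) (x y : Fin d),
        ((V : Matrix (Fin d) (Fin d) ℂ) * N * (V : Matrix (Fin d) (Fin d) ℂ)ᴴ) x y
          = ∑ l, ∑ k, (V : Matrix (Fin d) (Fin d) ℂ) x k * N k l
              * (V : Matrix (Fin d) (Fin d) ℂ)ᴴ l y := by
      intro N x y
      rw [Matrix.mul_apply]
      refine Finset.sum_congr rfl fun l _ => ?_
      rw [Matrix.mul_apply, Finset.sum_mul]
    have hmove : ∀ U : Matrix.unitaryGroup (Fin d) ℂ,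
        (V : Matrix (Fin d) (Fin d) ℂ) * f U * (V : Matrix (Fin d) (Fin d) ℂ)ᴴ
          = f (V * U) := by
      intro U
      simp only [hf, Matrix.UnitaryGroup.mul_val, Matrix.conjTranspose_mul, Matrix.mul_assoc]
    have key : (V : Matrix (Fin d) (Fin d) ℂ) * M * (V : Matrix (Fin d) (Fin d) ℂ)ᴴ = M := by
      ext x y
      calc ((V : Matrix (Fin d) (Fin d) ℂ) * M * (V : Matrix (Fin d) (Fin d) ℂ)ᴴ) x y
          = ∑ l, ∑ k, (V : Matrix (Fin d) (Fin d) ℂ) x k * M k l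
              * (V : Matrix (Fin d) (Fin d) ℂ)ᴴ l y := expand M x y
        _ = ∑ l, ∑ k, ∫ U, (V : Matrix (Fin d) (Fin d) ℂ) x k * f U k l
              * (V : Matrix (Fin d) (Fin d) ℂ)ᴴ l y ∂μ := by
            refine Finset.sum_congr rfl fun l _ => Finset.sum_congr rfl fun k _ => ?_
            rw [hMapply, ← integral_const_mul, ← integral_mul_const]
        _ = ∫ U, ∑ l, ∑ k, (V : Matrix (Fin d) (Fin d) ℂ) x k * f U k l
              * (V : Matrix (Fin d) (Fin d) ℂ)ᴴ l y ∂μ := by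
            rw [integral_finset_sum _
              (fun l _ => integrable_finset_sum _
                (fun k _ => ((hint k l).const_mul _).mul_const _))]
            exact Finset.sum_congr rfl fun l _ =>
              (integral_finset_sum _ fun k _ => ((hint k l).const_mul _).mul_const _).symm
        _ = ∫ U, f (V * U) x y ∂μ := by
            have hpt : ∀ U : Matrix.unitaryGroup (Fin d) ℂ,
                ∑ l, ∑ k, (V : Matrix (Fin d) (Fin d) ℂ) x k * f U k l
                  * (V : Matrix (Fin d) (Fin d) ℂ)ᴴ l y = f (V * U) x y := by
              intro U
              rw [← expand (f U) x y, hmove U]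
            exact integral_congr_ae (Filter.Eventually.of_forall fun U => hpt U)
        _ = ∫ U, f U x y ∂μ := integral_mul_left_eq_self (fun U => f U x y) V
        _ = M x y := (hMapply x y).symm
    have hVV : (V : Matrix (Fin d) (Fin d) ℂ)ᴴ * (V : Matrix (Fin d) (Fin d) ℂ) = 1 := by
      have := Matrix.UnitaryGroup.star_mul_self V
      rwa [Matrix.star_eq_conjTranspose] at this
    calc (V : Matrix (Fin d) (Fin d) ℂ) * M
        = (V : Matrix (Fin d) (Fin d) ℂ) * M
            * ((V : Matrix (Fin d) (Fin d) ℂ)ᴴ * (V : Matrix (Fin d) (Fin d) ℂ)) := by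
          rw [hVV, mul_one]
      _ = ((V : Matrix (Fin d) (Fin d) ℂ) * M * (V : Matrix (Fin d) (Fin d) ℂ)ᴴ)
            * (V : Matrix (Fin d) (Fin d) ℂ) := by
          rw [mul_assoc, mul_assoc, mul_assoc]
      _ = M * (V : Matrix (Fin d) (Fin d) ℂ) := by rw [key]
  -- trace
  have htrace : M.trace = A.trace := by
    calc M.trace = ∑ i, ∫ U, f U i i ∂μ := by
          rw [Matrix.trace]; exact Finset.sum_congr rfl fun i _ => hMapply i i
      _ = ∫ U, ∑ i, f U i i ∂μ := (integral_finset_sum _ fun i _ => hint i i).symm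
      _ = ∫ _U : Matrix.unitaryGroup (Fin d) ℂ, A.trace ∂μ := by
          have hpt : ∀ U : Matrix.unitaryGroup (Fin d) ℂ, ∑ i, f U i i = A.trace := by
            intro U
            have h1 : ∑ i, f U i i = (f U).trace := rfl
            rw [h1, hf]
            have hUU : (U : Matrix (Fin d) (Fin d) ℂ)ᴴ * (U : Matrix (Fin d) (Fin d) ℂ) = 1 := by
              have := Matrix.UnitaryGroup.star_mul_self U
              rwa [Matrix.star_eq_conjTranspose] at this
            rw [Matrix.trace_mul_cycle, hUU, one_mul]
          exact integral_congr_ae (Filter.Eventually.of_forall fun U => hpt U)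
      _ = A.trace := by simp
  have := scalar_of_commute hd M hcomm
  rw [htrace] at this
  exact this
end

section
/- Let d ≥ 1, let μ be the Haar probability measure on the unitary group U(d) = Matrix.unitaryGroup (Fin d) ℂ, and let P : Matrix (Fin d) (Fin d) ℂ be a Hermitian matrix. Then ∫ U, ∫ V, ‖U P U† − V P V†‖_F² dμ(V) dμ(U) = 2·( Re trace(P·P) − (Re trace P)² / d ), where ‖·‖_F denotes the Frobenius (Hilbert–Schmidt) norm. -/
set_option linter.unusedSectionVars false

open MeasureTheory
open scoped Matrix

noncomputable def frobNorm {ι : Type*} [Fintype ι] (A : Matrix ι ι ℂ) : ℝ :=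
  Real.sqrt (∑ x, ∑ y, ‖A x y‖ ^ 2)

namespace HaarFrobAux

instance matrixBorel {m n : Type*} [Countable m] [Countable n] :
    BorelSpace (Matrix m n ℂ) :=
  (Pi.borelSpace : BorelSpace (m → n → ℂ))

instance ugBorel {d : ℕ} : BorelSpace (Matrix.unitaryGroup (Fin d) ℂ) :=
  Subtype.borelSpace _

open Matrix in
instance ugCompact {d : ℕ} : CompactSpace (Matrix.unitaryGroup (Fin d) ℂ) := by
  have hclosed : IsClosed ((Matrix.unitaryGroup (Fin d) ℂ) : Set (Matrix (Fin d) (Fin d) ℂ)) := by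
    have hc : Continuous fun A : Matrix (Fin d) (Fin d) ℂ => star A * A :=
      (continuous_id.matrix_conjTranspose).matrix_mul continuous_id
    have : ((Matrix.unitaryGroup (Fin d) ℂ) : Set (Matrix (Fin d) (Fin d) ℂ)) =
        (fun A : Matrix (Fin d) (Fin d) ℂ => star A * A) ⁻¹' {1} := by
      ext A
      simp [Matrix.mem_unitaryGroup_iff']
    rw [this]
    exact IsClosed.preimage hc isClosed_singleton
  have hsub : ((Matrix.unitaryGroup (Fin d) ℂ) : Set (Matrix (Fin d) (Fin d) ℂ)) ⊆
      Set.univ.pi fun _ : Fin d => Set.univ.pi fun _ : Fin d => Metric.closedBall (0:ℂ) 1 := by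
    intro A hA
    apply Set.mem_univ_pi.mpr
    intro i
    rw [Set.mem_univ_pi]
    intro j
    simpa [Complex.dist_eq] using entry_norm_bound_of_unitary hA i j
  exact isCompact_iff_compactSpace.mp (IsCompact.of_isClosed_subset
    (isCompact_univ_pi fun _ => isCompact_univ_pi fun _ => isCompact_closedBall _ _)
    hclosed hsub)

instance ugMeasurableMul {d : ℕ} : MeasurableMul (Matrix.unitaryGroup (Fin d) ℂ) := by
  constructor
  · intro c
    exact (Continuous.subtype_mk
      (continuous_const.mul (continuous_subtype_val)) _).measurable
  · intro c
    exact (Continuous.subtype_mk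
      ((continuous_subtype_val).mul continuous_const) _).measurable

variable {d : ℕ}

/-- The conjugation `V P V†`. -/
noncomputable def X (P : Matrix (Fin d) (Fin d) ℂ) (V : Matrix.unitaryGroup (Fin d) ℂ) :
    Matrix (Fin d) (Fin d) ℂ :=
  (V : Matrix (Fin d) (Fin d) ℂ) * P * (V : Matrix (Fin d) (Fin d) ℂ)ᴴ

lemma hUU (U : Matrix.unitaryGroup (Fin d) ℂ) :
    (U : Matrix (Fin d) (Fin d) ℂ)ᴴ * (U : Matrix (Fin d) (Fin d) ℂ) = 1 := by
  rw [← Matrix.star_eq_conjTranspose]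
  exact Matrix.UnitaryGroup.star_mul_self U

lemma cancelU (U : Matrix.unitaryGroup (Fin d) ℂ) (C : Matrix (Fin d) (Fin d) ℂ) :
    (U : Matrix (Fin d) (Fin d) ℂ)ᴴ * ((U : Matrix (Fin d) (Fin d) ℂ) * C) = C := by
  rw [← Matrix.mul_assoc, hUU, Matrix.one_mul]

lemma trace_conj (U : Matrix.unitaryGroup (Fin d) ℂ) (A : Matrix (Fin d) (Fin d) ℂ) :
    ((U : Matrix (Fin d) (Fin d) ℂ) * A * (U : Matrix (Fin d) (Fin d) ℂ)ᴴ).trace = A.trace := by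
  rw [Matrix.trace_mul_comm, cancelU]

lemma X_mul_X (P Q : Matrix (Fin d) (Fin d) ℂ) (U : Matrix.unitaryGroup (Fin d) ℂ) :
    X P U * X Q U = (U : Matrix (Fin d) (Fin d) ℂ) * (P * Q) * (U : Matrix (Fin d) (Fin d) ℂ)ᴴ := by
  unfold X
  simp only [Matrix.mul_assoc, cancelU]

lemma X_herm (P : Matrix (Fin d) (Fin d) ℂ) (hP : Pᴴ = P) (U : Matrix.unitaryGroup (Fin d) ℂ) :
    (X P U)ᴴ = X P U := by
  unfold X
  simp [Matrix.conjTranspose_mul, hP, Matrix.mul_assoc]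

lemma X_cont (P : Matrix (Fin d) (Fin d) ℂ) : Continuous (X P) := by
  exact ((continuous_subtype_val.matrix_mul continuous_const).matrix_mul
    (continuous_subtype_val.matrix_conjTranspose))

lemma X_mul_left (P : Matrix (Fin d) (Fin d) ℂ) (W V : Matrix.unitaryGroup (Fin d) ℂ) :
    X P (W * V) = (W : Matrix (Fin d) (Fin d) ℂ) * X P V * (W : Matrix (Fin d) (Fin d) ℂ)ᴴ := by
  unfold X
  simp [Matrix.UnitaryGroup.mul_val, Matrix.conjTranspose_mul, Matrix.mul_assoc]


lemma frob_sq (A : Matrix (Fin d) (Fin d) ℂ) :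
    frobNorm A ^ 2 = (Aᴴ * A).trace.re := by
  have h0 : (0:ℝ) ≤ ∑ x, ∑ y, ‖A x y‖ ^ 2 := by positivity
  rw [frobNorm, Real.sq_sqrt h0, Matrix.trace]
  simp only [Matrix.diag_apply, Matrix.mul_apply, Matrix.conjTranspose_apply]
  rw [Complex.re_sum]
  rw [Finset.sum_comm]
  refine Finset.sum_congr rfl fun x _ => ?_
  rw [Complex.re_sum]
  refine Finset.sum_congr rfl fun y _ => ?_
  simp only [← Complex.normSq_eq_norm_sq, Complex.normSq_apply, RCLike.star_def, Complex.mul_re,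
    Complex.conj_re, Complex.conj_im]
  ring

lemma pointwise (P : Matrix (Fin d) (Fin d) ℂ) (hP : Pᴴ = P)
    (U V : Matrix.unitaryGroup (Fin d) ℂ) :
    frobNorm (X P U - X P V) ^ 2 =
      2 * ((P * P).trace.re) - 2 * ((X P U * X P V).trace.re) := by
  rw [frob_sq]
  have hH : (X P U - X P V)ᴴ = X P U - X P V := by
    rw [Matrix.conjTranspose_sub, X_herm P hP, X_herm P hP]
  rw [hH]
  have hexp : (X P U - X P V) * (X P U - X P V) =
      X P U * X P U - X P U * X P V - (X P V * X P U - X P V * X P V) := by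
    rw [Matrix.sub_mul, Matrix.mul_sub, Matrix.mul_sub]
  rw [hexp, Matrix.trace_sub, Matrix.trace_sub, Matrix.trace_sub]
  have h1 : (X P U * X P U).trace = (P * P).trace := by
    rw [X_mul_X, trace_conj]
  have h2 : (X P V * X P V).trace = (P * P).trace := by
    rw [X_mul_X, trace_conj]
  have h3 : (X P V * X P U).trace = (X P U * X P V).trace := Matrix.trace_mul_comm _ _
  rw [h1, h2, h3]
  simp only [Complex.sub_re]
  ring


lemma contInt {E : Type*} [NormedAddCommGroup E]
    (μ : Measure (Matrix.unitaryGroup (Fin d) ℂ)) [μ.IsHaarMeasure]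
    (f : Matrix.unitaryGroup (Fin d) ℂ → E) (hf : Continuous f) : Integrable f μ :=
  hf.integrable_of_hasCompactSupport
    (IsCompact.of_isClosed_subset isCompact_univ (isClosed_tsupport f) (Set.subset_univ _))

variable (μ : Measure (Matrix.unitaryGroup (Fin d) ℂ)) [μ.IsHaarMeasure]
  [IsProbabilityMeasure μ]

/-- Entrywise Haar average of `V P V†`. -/
noncomputable def M (P : Matrix (Fin d) (Fin d) ℂ) : Matrix (Fin d) (Fin d) ℂ :=
  Matrix.of fun i j => ∫ V, X P V i j ∂μ

omit [IsProbabilityMeasure μ] in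
lemma entryInt (P : Matrix (Fin d) (Fin d) ℂ) (i j : Fin d) :
    Integrable (fun V => X P V i j) μ :=
  contInt μ _ ((X_cont P).matrix_elem i j)

lemma weighted (P c : Matrix (Fin d) (Fin d) ℂ) :
    ∑ k, ∑ l, c k l * M μ P k l = ∫ V, (∑ k, ∑ l, c k l * X P V k l) ∂μ := by
  rw [integral_finset_sum _ (fun k _ => integrable_finset_sum _
    (fun l _ => ((entryInt μ P k l).const_mul (c k l))))]
  refine Finset.sum_congr rfl fun k _ => ?_
  rw [integral_finset_sum _ (fun l _ => ((entryInt μ P k l).const_mul (c k l)))]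
  refine Finset.sum_congr rfl fun l _ => ?_
  rw [MeasureTheory.integral_const_mul]
  rfl

lemma entry_expand (A N B : Matrix (Fin d) (Fin d) ℂ) (i j : Fin d) :
    (A * N * B) i j = ∑ k, ∑ l, (A i k * B l j) * N k l := by
  rw [Matrix.mul_apply]
  simp_rw [Matrix.mul_apply, Finset.sum_mul]
  rw [Finset.sum_comm]
  refine Finset.sum_congr rfl fun k _ => ?_
  refine Finset.sum_congr rfl fun l _ => ?_
  ring

lemma tr_mul_expand (A N : Matrix (Fin d) (Fin d) ℂ) :
    (A * N).trace = ∑ k, ∑ l, A l k * N k l := by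
  rw [Matrix.trace]
  simp_rw [Matrix.diag_apply, Matrix.mul_apply]
  rw [Finset.sum_comm]

lemma smul_M (P A B : Matrix (Fin d) (Fin d) ℂ) :
    A * M μ P * B = Matrix.of fun i j => ∫ V, (A * X P V * B) i j ∂μ := by
  ext i j
  rw [Matrix.of_apply, entry_expand, weighted μ P (fun k l => A i k * B l j)]
  refine integral_congr_ae (Filter.Eventually.of_forall fun V => ?_)
  simp only
  rw [entry_expand]

lemma conj_M (P : Matrix (Fin d) (Fin d) ℂ) (W : Matrix.unitaryGroup (Fin d) ℂ) :
    (W : Matrix (Fin d) (Fin d) ℂ) * M μ P * (W : Matrix (Fin d) (Fin d) ℂ)ᴴ = M μ P := by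
  rw [smul_M]
  ext i j
  rw [Matrix.of_apply]
  have h : (fun V => ((W : Matrix (Fin d) (Fin d) ℂ) * X P V *
      (W : Matrix (Fin d) (Fin d) ℂ)ᴴ) i j) = fun V => X P (W * V) i j := by
    funext V
    rw [X_mul_left]
  rw [h]
  exact integral_mul_left_eq_self (fun V => X P V i j) W


lemma perm_star (σ : Equiv.Perm (Fin d)) :
    star (σ.permMatrix ℂ) = (σ.symm.toPEquiv.toMatrix : Matrix (Fin d) (Fin d) ℂ) := by
  rw [Equiv.toPEquiv_symm, PEquiv.toMatrix_symm, Matrix.star_eq_conjTranspose]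
  ext k l
  simp only [Matrix.conjTranspose_apply, Matrix.transpose_apply, Equiv.Perm.permMatrix,
    PEquiv.toMatrix_apply, apply_ite (star : ℂ → ℂ), star_one, star_zero]

lemma perm_mem (σ : Equiv.Perm (Fin d)) :
    (σ.permMatrix ℂ) ∈ Matrix.unitaryGroup (Fin d) ℂ := by
  rw [Matrix.mem_unitaryGroup_iff', perm_star]
  rw [show (σ.permMatrix ℂ : Matrix (Fin d) (Fin d) ℂ) = σ.toPEquiv.toMatrix from rfl]
  rw [← PEquiv.toMatrix_trans, ← Equiv.toPEquiv_trans, Equiv.symm_trans_self,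
    Equiv.toPEquiv_refl, PEquiv.toMatrix_refl]

lemma M_perm (P : Matrix (Fin d) (Fin d) ℂ) (σ : Equiv.Perm (Fin d)) (i j : Fin d) :
    M μ P (σ i) (σ j) = M μ P i j := by
  set W : Matrix.unitaryGroup (Fin d) ℂ := ⟨σ.permMatrix ℂ, perm_mem σ⟩ with hW
  have h := conj_M μ P W
  have hcoe : (W : Matrix (Fin d) (Fin d) ℂ) = σ.toPEquiv.toMatrix := rfl
  have hcoeH : (W : Matrix (Fin d) (Fin d) ℂ)ᴴ = σ.symm.toPEquiv.toMatrix := by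
    rw [← Matrix.star_eq_conjTranspose, hcoe]
    exact perm_star σ
  rw [hcoe, hcoeH, PEquiv.toMatrix_toPEquiv_mul, PEquiv.mul_toMatrix_toPEquiv] at h
  have := congrFun (congrFun h i) j
  simpa [Matrix.submatrix_apply] using this


lemma M_offdiag (P : Matrix (Fin d) (Fin d) ℂ) {i j : Fin d} (hij : i ≠ j) :
    M μ P i j = 0 := by
  set ε : Fin d → ℂ := fun k => if k = i then (-1 : ℂ) else 1 with hε
  have hmem : Matrix.diagonal ε ∈ Matrix.unitaryGroup (Fin d) ℂ := by
    rw [Matrix.mem_unitaryGroup_iff', Matrix.star_eq_conjTranspose,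
      Matrix.diagonal_conjTranspose, Matrix.diagonal_mul_diagonal]
    ext k l
    rcases eq_or_ne k l with rfl | hkl
    · by_cases hki : k = i
      · subst hki; simp [hε, Matrix.one_apply]
      · simp [hε, Matrix.one_apply, hki]
    · simp [Matrix.diagonal_apply_ne _ hkl, Matrix.one_apply, hkl]
  set W : Matrix.unitaryGroup (Fin d) ℂ := ⟨Matrix.diagonal ε, hmem⟩ with hW
  have h := conj_M μ P W
  have hcoe : (W : Matrix (Fin d) (Fin d) ℂ) = Matrix.diagonal ε := rfl
  have hcoeH : (W : Matrix (Fin d) (Fin d) ℂ)ᴴ = Matrix.diagonal (star ε) := by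
    rw [hcoe, Matrix.diagonal_conjTranspose]
  have hentry := congrFun (congrFun h i) j
  rw [hcoe, hcoeH] at hentry
  have : (Matrix.diagonal ε * M μ P * Matrix.diagonal (star ε)) i j =
      ε i * M μ P i j * star (ε j) := by
    rw [Matrix.mul_diagonal, Matrix.diagonal_mul, Pi.star_apply]
  rw [this] at hentry
  have hεi : ε i = -1 := by simp [hε]
  have hεj : ε j = 1 := by simp [hε, (Ne.symm hij)]
  rw [hεi, hεj, star_one, mul_one] at hentry
  have : M μ P i j + M μ P i j = 0 := by
    nth_rewrite 1 [← hentry]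
    ring
  exact add_self_eq_zero.mp this

lemma M_eq (hd : 1 ≤ d) (P : Matrix (Fin d) (Fin d) ℂ) (hP : Pᴴ = P) :
    M μ P = (P.trace / d) • (1 : Matrix (Fin d) (Fin d) ℂ) := by
  set i0 : Fin d := ⟨0, hd⟩ with hi0
  set c : ℂ := M μ P i0 i0 with hc
  have hdiag : ∀ i : Fin d, M μ P i i = c := by
    intro i
    have := M_perm μ P (Equiv.swap i0 i) i0 i0
    rwa [Equiv.swap_apply_left] at this
  have hMc : M μ P = c • (1 : Matrix (Fin d) (Fin d) ℂ) := by
    ext i j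
    by_cases hij : i = j
    · subst hij
      simp [hdiag i, Matrix.one_apply]
    · simp [M_offdiag μ P hij, Matrix.one_apply, hij]
  -- trace of M equals trace of P
  have htr : (M μ P).trace = P.trace := by
    have hexp : (M μ P).trace = ∑ k, ∑ l, (1 : Matrix (Fin d) (Fin d) ℂ) l k * M μ P k l := by
      have := tr_mul_expand (1 : Matrix (Fin d) (Fin d) ℂ) (M μ P)
      rwa [Matrix.one_mul] at this
    rw [hexp, weighted μ P (fun k l => (1 : Matrix (Fin d) (Fin d) ℂ) l k)]
    have : ∀ V : Matrix.unitaryGroup (Fin d) ℂ,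
        (∑ k, ∑ l, (1 : Matrix (Fin d) (Fin d) ℂ) l k * X P V k l) = P.trace := by
      intro V
      have := tr_mul_expand (1 : Matrix (Fin d) (Fin d) ℂ) (X P V)
      rw [Matrix.one_mul] at this
      rw [← this]
      exact trace_conj V P
    rw [integral_congr_ae (Filter.Eventually.of_forall this), integral_const]
    simp
  rw [hMc] at htr
  rw [Matrix.trace_smul, Matrix.trace_one] at htr
  have hd0 : (d : ℂ) ≠ 0 := by
    exact_mod_cast Nat.cast_ne_zero.mpr (by omega)
  rw [hMc]
  congr 1
  have : c * d = P.trace := by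
    simpa [smul_eq_mul, mul_comm] using htr
  field_simp [hd0]
  linear_combination this


lemma c0_eq (hd : 1 ≤ d) (P : Matrix (Fin d) (Fin d) ℂ) (hP : Pᴴ = P) :
    ∫ V, ((P * X P V).trace).re ∂μ = (P.trace.re) ^ 2 / d := by
  have hcont : Continuous fun V : Matrix.unitaryGroup (Fin d) ℂ => (P * X P V).trace :=
    (continuous_const.matrix_mul (X_cont P)).matrix_trace
  have hint : Integrable (fun V => (P * X P V).trace) μ := contInt μ _ hcont
  have h1 : ∫ V, (P * X P V).trace ∂μ = (P * M μ P).trace := by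
    rw [tr_mul_expand P (M μ P), weighted μ P (fun k l => P l k)]
    exact integral_congr_ae (Filter.Eventually.of_forall fun V => (tr_mul_expand P (X P V)))
  have hre : ∫ V, ((P * X P V).trace).re ∂μ = ((P * M μ P).trace).re := by
    rw [← h1]
    simpa using integral_re hint
  rw [hre, M_eq μ hd P hP, Matrix.mul_smul, Matrix.mul_one, Matrix.trace_smul]
  have him : P.trace.im = 0 := by
    have h := Matrix.trace_conjTranspose P
    rw [hP] at h
    have : P.trace = (starRingEnd ℂ) P.trace := h
    have h2 := congrArg Complex.im this
    simp only [Complex.conj_im] at h2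
    linarith
  have hteq : P.trace = ((P.trace.re : ℝ) : ℂ) := Complex.ext rfl (by simp [him])
  rw [hteq]
  have hcalc : ((((P.trace.re : ℝ) : ℂ) / (d : ℂ)) • ((P.trace.re : ℝ) : ℂ)) =
      (((P.trace.re ^ 2 / d : ℝ)) : ℂ) := by
    rw [smul_eq_mul]
    push_cast
    ring
  rw [hcalc, Complex.ofReal_re, Complex.ofReal_re]

end HaarFrobAux

open HaarFrobAux

/-- Haar average of the squared Frobenius distance between two independent
random rotations of a Hermitian matrix. -/
theorem haar_average_frobenius_sq
    {d : ℕ} (hd : 1 ≤ d)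
    (μ : Measure (Matrix.unitaryGroup (Fin d) ℂ))
    [μ.IsHaarMeasure] [IsProbabilityMeasure μ]
    (P : Matrix (Fin d) (Fin d) ℂ) (hP : Pᴴ = P) :
    (∫ U : Matrix.unitaryGroup (Fin d) ℂ, ∫ V : Matrix.unitaryGroup (Fin d) ℂ,
        (frobNorm ((U : Matrix (Fin d) (Fin d) ℂ) * P * (U : Matrix (Fin d) (Fin d) ℂ)ᴴ -
          (V : Matrix (Fin d) (Fin d) ℂ) * P * (V : Matrix (Fin d) (Fin d) ℂ)ᴴ)) ^ 2 ∂μ ∂μ) =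
      2 * (((P * P).trace).re - ((P.trace).re) ^ 2 / (d : ℝ)) := by
  have hrw : (∫ U : Matrix.unitaryGroup (Fin d) ℂ, ∫ V : Matrix.unitaryGroup (Fin d) ℂ,
        (frobNorm ((U : Matrix (Fin d) (Fin d) ℂ) * P * (U : Matrix (Fin d) (Fin d) ℂ)ᴴ -
          (V : Matrix (Fin d) (Fin d) ℂ) * P * (V : Matrix (Fin d) (Fin d) ℂ)ᴴ)) ^ 2 ∂μ ∂μ) =
      ∫ U, ∫ V, (frobNorm (X P U - X P V)) ^ 2 ∂μ ∂μ := rfl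
  rw [hrw]
  set t2 : ℝ := ((P * P).trace).re with ht2
  set c0 : ℝ := ∫ V, ((P * X P V).trace).re ∂μ with hc0
  have hfint : ∀ U, Integrable (fun V => ((X P U * X P V).trace).re) μ := fun U =>
    contInt μ _ (Complex.continuous_re.comp
      ((continuous_const.matrix_mul (X_cont P)).matrix_trace))
  have hinner : ∀ U, ∫ V, (frobNorm (X P U - X P V)) ^ 2 ∂μ = 2 * t2 - 2 * c0 := by
    intro U
    have h1 : ∫ V, (frobNorm (X P U - X P V)) ^ 2 ∂μ =
        ∫ V, (2 * t2 - 2 * ((X P U * X P V).trace).re) ∂μ :=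
      integral_congr_ae (Filter.Eventually.of_forall fun V => pointwise P hP U V)
    rw [h1, integral_sub (integrable_const _) ((hfint U).const_mul 2), integral_const]
    have h2 : ∫ V, 2 * ((X P U * X P V).trace).re ∂μ =
        2 * ∫ V, ((X P U * X P V).trace).re ∂μ := MeasureTheory.integral_const_mul 2 _
    rw [h2]
    have h3 : ∫ V, ((X P U * X P V).trace).re ∂μ = c0 := by
      have hinv := integral_mul_left_eq_self (μ := μ)
        (fun V => ((X P U * X P V).trace).re) U
      have h4 : ∀ V, ((X P U * X P (U * V)).trace) = ((P * X P V).trace) := by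
        intro V
        rw [X_mul_left]
        have h5 : X P U * ((U : Matrix (Fin d) (Fin d) ℂ) * X P V *
            (U : Matrix (Fin d) (Fin d) ℂ)ᴴ) =
            (U : Matrix (Fin d) (Fin d) ℂ) * (P * X P V) *
            (U : Matrix (Fin d) (Fin d) ℂ)ᴴ := by
          unfold X
          simp only [Matrix.mul_assoc, cancelU]
        rw [h5, trace_conj]
      rw [← hinv]
      refine integral_congr_ae (Filter.Eventually.of_forall fun V => ?_)
      simp only
      rw [h4]
    rw [h3]
    simp [measure_univ]
  have houter : (fun U => ∫ V, (frobNorm (X P U - X P V)) ^ 2 ∂μ) =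
      fun _ : Matrix.unitaryGroup (Fin d) ℂ => 2 * t2 - 2 * c0 := funext hinner
  rw [houter, integral_const]
  have hc : c0 = (P.trace.re) ^ 2 / d := c0_eq μ hd P hP
  rw [hc]
  simp [measure_univ]
  ring
end
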